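/- In the setting of the preceding construction (X, Y with countable coinitial subsets, M pfd and weakly exact, R a rectangle satisfying Ker⁺_{r,s} ∩ Ker⁺_{t,s} ⊆ Im⁺_{R,s} for all s ∈ R, and M_R the submodule obtained from a complement W of L⁻ in L⁺ chosen inside lim_{u∈R}(Ker⁺_{r,u} ∩ Ker⁺_{t,u})), the submodule M_R is isomorphic to a direct sum of dim C_R(M) copies of the rectangle module k_R, where C_R(M) = lim_{u∈R} V⁺_{R,u}(M)/V⁻_{R,u}(M) is the counting functor. -/

import Mathlib

open CategoryTheory

attribute [local instance 10000] Preorder.smallCategory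

attribute [local instance] Classical.propDecidable

abbrev PersistenceModule (K : Type) [Field K] (P : Type) [Preorder P] := P ⥤ ModuleCat.{0} K

variable (K : Type) [Field K]

/-- The internal linear map of a persistence module associated to `s ≤ t`. -/
def rho {P : Type} [Preorder P] (M : PersistenceModule K P) {s t : P} (h : s ≤ t) :
    M.obj s →ₗ[K] M.obj t :=
  (M.map (homOfLE h)).hom

def Pfd {P : Type} [Preorder P] (M : PersistenceModule K P) : Prop :=
  ∀ p : P, FiniteDimensional K (M.obj p)

def IsConvexSet {P : Type} [Preorder P] (S : Set P) : Prop :=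
  ∀ ⦃p s q : P⦄, p ≤ s → s ≤ q → p ∈ S → q ∈ S → s ∈ S

def IsConnectedSet {P : Type} [Preorder P] (S : Set P) : Prop :=
  ∀ p ∈ S, ∀ q ∈ S,
    Relation.ReflTransGen (fun a b => a ∈ S ∧ b ∈ S ∧ (a ≤ b ∨ b ≤ a)) p q

def IsIntervalSet {P : Type} [Preorder P] (S : Set P) : Prop :=
  IsConvexSet S ∧ IsConnectedSet S

def IsRectangleSet {X Y : Type} [Preorder X] [Preorder Y] (R : Set (X × Y)) : Prop :=
  ∃ (I : Set X) (J : Set Y), IsIntervalSet I ∧ IsIntervalSet J ∧ R = I ×ˢ J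

/-- The direct sum of the interval (indicator) modules of a family of convex sets. -/
noncomputable def intervalDirectSum {P : Type} [Preorder P] {ι : Type} (S : ι → Set P)
    (hS : ∀ i, IsConvexSet (S i)) : PersistenceModule K P where
  obj t := ModuleCat.of K ({i : ι // t ∈ S i} → K)
  map {s t} _ := ModuleCat.ofHom
    (LinearMap.pi (fun j : {i : ι // t ∈ S i} =>
      if hs : (s : P) ∈ S j.1 then LinearMap.proj (⟨j.1, hs⟩ : {i : ι // s ∈ S i}) else 0))
  map_id t := by
    refine ModuleCat.hom_ext (LinearMap.ext fun v => funext fun j => ?_)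
    show ((if hs : (t : P) ∈ S j.1 then
        LinearMap.proj (⟨j.1, hs⟩ : {i : ι // t ∈ S i}) else 0 :
          ({i : ι // t ∈ S i} → K) →ₗ[K] K)) v = v j
    rw [dif_pos j.2]
    rfl
  map_comp {s t u} f g := by
    refine ModuleCat.hom_ext (LinearMap.ext fun v => funext fun j => ?_)
    show ((if hs : (s : P) ∈ S j.1 then
        LinearMap.proj (⟨j.1, hs⟩ : {i : ι // s ∈ S i}) else 0 :
          ({i : ι // s ∈ S i} → K) →ₗ[K] K)) v =
      ((if ht : (t : P) ∈ S j.1 then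
        LinearMap.proj (⟨j.1, ht⟩ : {i : ι // t ∈ S i}) else 0 :
          ({i : ι // t ∈ S i} → K) →ₗ[K] K))
        (LinearMap.pi (fun j' : {i : ι // t ∈ S i} =>
          (if hs : (s : P) ∈ S j'.1 then
            LinearMap.proj (⟨j'.1, hs⟩ : {i : ι // s ∈ S i}) else 0 :
              ({i : ι // s ∈ S i} → K) →ₗ[K] K)) v)
    by_cases hs : (s : P) ∈ S j.1
    · have ht : (t : P) ∈ S j.1 := hS j.1 (leOfHom f) (leOfHom g) hs j.2
      rw [dif_pos hs, dif_pos ht, LinearMap.proj_apply, LinearMap.proj_apply,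
        LinearMap.pi_apply, dif_pos hs]
      rfl
    · by_cases ht : (t : P) ∈ S j.1
      · rw [dif_neg hs, dif_pos ht, LinearMap.zero_apply, LinearMap.proj_apply,
          LinearMap.pi_apply, dif_neg hs, LinearMap.zero_apply]
      · rw [dif_neg hs, dif_neg ht, LinearMap.zero_apply, LinearMap.zero_apply]

def InDec {P : Type} [Preorder P] (M : PersistenceModule K P) (𝒮 : Set (Set P)) : Prop :=
  ∃ (ι : Type) (S : ι → Set P) (hS : ∀ i, IsConvexSet (S i)),
    (∀ i, S i ∈ 𝒮) ∧ (∀ t : P, {i | t ∈ S i}.Finite) ∧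
      Nonempty (M ≅ intervalDirectSum K S hS)

def restrictMod {P : Type} [Preorder P] (M : PersistenceModule K P) (Q : Set P) :
    PersistenceModule K ↥Q :=
  (Subtype.mono_coe (· ∈ Q)).functor ⋙ M

def restrictClass {P : Type} (𝒮 : Set (Set P)) (Q : Set P) : Set (Set ↥Q) :=
  {T | ∃ S ∈ 𝒮, T = Subtype.val ⁻¹' S}

/-- Weak exactness of a persistence bimodule. -/
def WeaklyExact {X Y : Type} [Preorder X] [Preorder Y]
    (M : PersistenceModule K (X × Y)) : Prop :=
  ∀ (s t : X × Y) (h : s ≤ t),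
    (LinearMap.range (rho K M h) =
      LinearMap.range (rho K M (show (t.1, s.2) ≤ t from ⟨le_rfl, h.2⟩)) ⊓
      LinearMap.range (rho K M (show (s.1, t.2) ≤ t from ⟨h.1, le_rfl⟩))) ∧
    (LinearMap.ker (rho K M h) =
      LinearMap.ker (rho K M (show s ≤ (t.1, s.2) from ⟨h.1, le_rfl⟩)) ⊔
      LinearMap.ker (rho K M (show s ≤ (s.1, t.2) from ⟨le_rfl, h.2⟩)))

/-! ## Cuts, rectangles via cuts, and the functorial filtration -/

/-- A cut of a totally ordered set: a partition into a lower and an upper part. -/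
structure Cut (X : Type) [LinearOrder X] where
  lower : Set X
  upper : Set X
  union_eq : lower ∪ upper = Set.univ
  lt : ∀ x ∈ lower, ∀ y ∈ upper, x < y

theorem Cut.mem_upper_of_le {X : Type} [LinearOrder X] (c : Cut X) {a b : X}
    (ha : a ∈ c.upper) (h : a ≤ b) : b ∈ c.upper := by
  have hb : b ∈ c.lower ∪ c.upper := by rw [c.union_eq]; trivial
  rcases hb with hb | hb
  · exact absurd (lt_of_lt_of_le (c.lt b hb a ha) h) (lt_irrefl b)
  · exact hb

theorem Cut.mem_lower_of_le {X : Type} [LinearOrder X] (c : Cut X) {a b : X}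
    (hb : b ∈ c.lower) (h : a ≤ b) : a ∈ c.lower := by
  have hb' : a ∈ c.lower ∪ c.upper := by rw [c.union_eq]; trivial
  rcases hb' with hb' | hb'
  · exact hb'
  · exact absurd (lt_of_lt_of_le (c.lt b hb a hb') h) (lt_irrefl b)

/-- The rectangle `(l⁺ ∩ r⁻) × (b⁺ ∩ t⁻)` associated to four cuts. -/
def rectOf {X Y : Type} [LinearOrder X] [LinearOrder Y]
    (l r : Cut X) (b t : Cut Y) : Set (X × Y) :=
  (l.upper ∩ r.lower) ×ˢ (b.upper ∩ t.lower)

theorem isConvex_rectOf {X Y : Type} [LinearOrder X] [LinearOrder Y]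
    (l r : Cut X) (b t : Cut Y) : IsConvexSet (rectOf l r b t) := by
  rintro p s q hps hsq ⟨⟨hp1, hp2⟩, hp3, hp4⟩ ⟨⟨hq1, hq2⟩, hq3, hq4⟩
  exact ⟨⟨l.mem_upper_of_le hp1 hps.1, r.mem_lower_of_le hq2 hsq.1⟩,
    b.mem_upper_of_le hp3 hps.2, t.mem_lower_of_le hq4 hsq.2⟩

/-- The upset `R⁺` of a subset of a poset. -/
def upsetOf {P : Type} [Preorder P] (R : Set P) : Set P := {u | ∃ s ∈ R, s ≤ u}

theorem isConvex_upsetOf {P : Type} [Preorder P] (R : Set P) : IsConvexSet (upsetOf R) := by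
  rintro p s q hps _ ⟨w, hw, hwp⟩ _
  exact ⟨w, hw, hwp.trans hps⟩

theorem IsConvexSet.inter {P : Type} [Preorder P] {A B : Set P}
    (hA : IsConvexSet A) (hB : IsConvexSet B) : IsConvexSet (A ∩ B) := by
  rintro p s q hps hsq ⟨hpA, hpB⟩ ⟨hqA, hqB⟩
  exact ⟨hA hps hsq hpA hqA, hB hps hsq hpB hqB⟩

variable {X Y : Type} [LinearOrder X] [LinearOrder Y]

/-- Horizontal image space `Im⁺_{l,u}`. -/
noncomputable def ImPlusH (M : PersistenceModule K (X × Y)) (l : Cut X) (u : X × Y) :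
    Submodule K (M.obj u) :=
  ⨅ (x : X) (h : x ∈ l.upper ∧ x ≤ u.1),
    LinearMap.range (rho K M (show (x, u.2) ≤ u from ⟨h.2, le_rfl⟩))

/-- Horizontal image space `Im⁻_{l,u}`. -/
noncomputable def ImMinusH (M : PersistenceModule K (X × Y)) (l : Cut X) (u : X × Y) :
    Submodule K (M.obj u) :=
  ⨆ (x : X) (h : x ∈ l.lower ∧ x ≤ u.1),
    LinearMap.range (rho K M (show (x, u.2) ≤ u from ⟨h.2, le_rfl⟩))

/-- Horizontal kernel space `Ker⁺_{r,u}`. -/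
noncomputable def KerPlusH (M : PersistenceModule K (X × Y)) (r : Cut X) (u : X × Y) :
    Submodule K (M.obj u) :=
  ⨅ (x : X) (h : x ∈ r.upper ∧ u.1 ≤ x),
    LinearMap.ker (rho K M (show u ≤ (x, u.2) from ⟨h.2, le_rfl⟩))

/-- Horizontal kernel space `Ker⁻_{r,u}`. -/
noncomputable def KerMinusH (M : PersistenceModule K (X × Y)) (r : Cut X) (u : X × Y) :
    Submodule K (M.obj u) :=
  ⨆ (x : X) (h : x ∈ r.lower ∧ u.1 ≤ x),
    LinearMap.ker (rho K M (show u ≤ (x, u.2) from ⟨h.2, le_rfl⟩))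

/-- Vertical image space `Im⁺_{b,u}`. -/
noncomputable def ImPlusV (M : PersistenceModule K (X × Y)) (b : Cut Y) (u : X × Y) :
    Submodule K (M.obj u) :=
  ⨅ (y : Y) (h : y ∈ b.upper ∧ y ≤ u.2),
    LinearMap.range (rho K M (show (u.1, y) ≤ u from ⟨le_rfl, h.2⟩))

/-- Vertical image space `Im⁻_{b,u}`. -/
noncomputable def ImMinusV (M : PersistenceModule K (X × Y)) (b : Cut Y) (u : X × Y) :
    Submodule K (M.obj u) :=
  ⨆ (y : Y) (h : y ∈ b.lower ∧ y ≤ u.2),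
    LinearMap.range (rho K M (show (u.1, y) ≤ u from ⟨le_rfl, h.2⟩))

/-- Vertical kernel space `Ker⁺_{t,u}`. -/
noncomputable def KerPlusV (M : PersistenceModule K (X × Y)) (t : Cut Y) (u : X × Y) :
    Submodule K (M.obj u) :=
  ⨅ (y : Y) (h : y ∈ t.upper ∧ u.2 ≤ y),
    LinearMap.ker (rho K M (show u ≤ (u.1, y) from ⟨le_rfl, h.2⟩))

/-- Vertical kernel space `Ker⁻_{t,u}`. -/
noncomputable def KerMinusV (M : PersistenceModule K (X × Y)) (t : Cut Y) (u : X × Y) :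
    Submodule K (M.obj u) :=
  ⨆ (y : Y) (h : y ∈ t.lower ∧ u.2 ≤ y),
    LinearMap.ker (rho K M (show u ≤ (u.1, y) from ⟨le_rfl, h.2⟩))

/-- `Im⁺_{R,u}`. -/
noncomputable def ImPlusR (M : PersistenceModule K (X × Y)) (l : Cut X) (b : Cut Y)
    (u : X × Y) : Submodule K (M.obj u) :=
  ImPlusH K M l u ⊓ ImPlusV K M b u

/-- `Im⁻_{R,u}`. -/
noncomputable def ImMinusR (M : PersistenceModule K (X × Y)) (l : Cut X) (b : Cut Y)
    (u : X × Y) : Submodule K (M.obj u) :=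
  (ImMinusH K M l u ⊔ ImMinusV K M b u) ⊓ ImPlusR K M l b u

/-- `Ker⁺_{R,u}`. -/
noncomputable def KerPlusR (M : PersistenceModule K (X × Y)) (r : Cut X) (t : Cut Y)
    (u : X × Y) : Submodule K (M.obj u) :=
  (KerPlusH K M r u ⊔ KerMinusV K M t u) ⊓ (KerMinusH K M r u ⊔ KerPlusV K M t u)

/-- `Ker⁻_{R,u}`. -/
noncomputable def KerMinusR (M : PersistenceModule K (X × Y)) (r : Cut X) (t : Cut Y)
    (u : X × Y) : Submodule K (M.obj u) :=
  KerMinusH K M r u ⊔ KerMinusV K M t u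

/-- The pointwise functorial filtration `V⁺_{R,u}(M)` (meaningful for `u ∈ R`). -/
noncomputable def VplusAt (M : PersistenceModule K (X × Y)) (l r : Cut X) (b t : Cut Y)
    (u : X × Y) : Submodule K (M.obj u) :=
  ImPlusR K M l b u ⊓ KerPlusR K M r t u

/-- The pointwise functorial filtration `V⁻_{R,u}(M)` (meaningful for `u ∈ R`). -/
noncomputable def VminusAt (M : PersistenceModule K (X × Y)) (l r : Cut X) (b t : Cut Y)
    (u : X × Y) : Submodule K (M.obj u) :=
  ImPlusR K M l b u ⊓ KerMinusR K M r t u ⊔ ImMinusR K M l b u ⊓ KerPlusR K M r t u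

/-- The extension of `V⁺_R(M)` to a family of subspaces over all of `X × Y`
(equal to `⋃_{s ∈ R, s ≤ u} ρ_s^u(V⁺_{R,s})` on the upset of `R` and `0` elsewhere). -/
noncomputable def VplusSub (M : PersistenceModule K (X × Y)) (l r : Cut X) (b t : Cut Y)
    (u : X × Y) : Submodule K (M.obj u) :=
  ⨆ (s : X × Y) (h : s ∈ rectOf l r b t ∧ s ≤ u),
    Submodule.map (rho K M h.2) (VplusAt K M l r b t s)

/-- The extension of `V⁻_R(M)` to a family of subspaces over all of `X × Y`. -/
noncomputable def VminusSub (M : PersistenceModule K (X × Y)) (l r : Cut X) (b t : Cut Y)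
    (u : X × Y) : Submodule K (M.obj u) :=
  ⨆ (s : X × Y) (h : s ∈ rectOf l r b t ∧ s ≤ u),
    Submodule.map (rho K M h.2) (VminusAt K M l r b t s)

theorem rho_comp {P : Type} [Preorder P] (M : PersistenceModule K P) {p q r : P}
    (h1 : p ≤ q) (h2 : q ≤ r) :
    (rho K M h2).comp (rho K M h1) = rho K M (h1.trans h2) := by
  rw [rho, rho, rho, ← homOfLE_comp h1 h2, M.map_comp]
  rfl

/-- The subfunctor of a persistence module determined by a compatible family of subspaces. -/
noncomputable def subfunctor {P : Type} [Preorder P] (M : PersistenceModule K P)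
    (S : ∀ p, Submodule K (M.obj p))
    (hS : ∀ (p q : P) (h : p ≤ q), (S p).map (rho K M h) ≤ S q) :
    PersistenceModule K P where
  obj p := ModuleCat.of K ↥(S p)
  map {p q} f := ModuleCat.ofHom
    ((rho K M (leOfHom f)).restrict
      (p := S p) (q := S q) (fun x hx => hS p q (leOfHom f) ⟨x, hx, rfl⟩))
  map_id p := by
    refine ModuleCat.hom_ext (LinearMap.ext fun x => Subtype.ext ?_)
    show (M.map (𝟙 p)).hom x.1 = x.1
    rw [M.map_id]
    rfl
  map_comp {p q r} f g := by
    refine ModuleCat.hom_ext (LinearMap.ext fun x => Subtype.ext ?_)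
    show (M.map (homOfLE ((leOfHom f).trans (leOfHom g)))).hom x.1 =
      (M.map (homOfLE (leOfHom g))).hom ((M.map (homOfLE (leOfHom f))).hom x.1)
    rw [← homOfLE_comp (leOfHom f) (leOfHom g), M.map_comp]
    rfl

theorem vplusSub_mapsTo (M : PersistenceModule K (X × Y)) (l r : Cut X) (b t : Cut Y) :
    ∀ (p q : X × Y) (h : p ≤ q),
      Submodule.map (rho K M h) (VplusSub K M l r b t p) ≤ VplusSub K M l r b t q := by
  intro p q h
  rw [VplusSub, Submodule.map_iSup]
  refine iSup_le fun s => ?_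
  rw [Submodule.map_iSup]
  refine iSup_le fun hs => ?_
  rw [← Submodule.map_comp, rho_comp K M hs.2 h]
  exact le_iSup_of_le s (le_iSup_of_le ⟨hs.1, hs.2.trans h⟩ le_rfl)

theorem vminusSub_mapsTo (M : PersistenceModule K (X × Y)) (l r : Cut X) (b t : Cut Y) :
    ∀ (p q : X × Y) (h : p ≤ q),
      Submodule.map (rho K M h) (VminusSub K M l r b t p) ≤ VminusSub K M l r b t q := by
  intro p q h
  rw [VminusSub, Submodule.map_iSup]
  refine iSup_le fun s => ?_
  rw [Submodule.map_iSup]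
  refine iSup_le fun hs => ?_
  rw [← Submodule.map_comp, rho_comp K M hs.2 h]
  exact le_iSup_of_le s (le_iSup_of_le ⟨hs.1, hs.2.trans h⟩ le_rfl)

/-- The submodule `V⁺_R(M)` of `M`, as a persistence module. -/
noncomputable def VplusMod (M : PersistenceModule K (X × Y)) (l r : Cut X) (b t : Cut Y) :
    PersistenceModule K (X × Y) :=
  subfunctor K M (VplusSub K M l r b t) (vplusSub_mapsTo K M l r b t)

/-- The submodule `V⁻_R(M)` of `M`, as a persistence module. -/
noncomputable def VminusMod (M : PersistenceModule K (X × Y)) (l r : Cut X) (b t : Cut Y) :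
    PersistenceModule K (X × Y) :=
  subfunctor K M (VminusSub K M l r b t) (vminusSub_mapsTo K M l r b t)

/-- The relation `R' σ R` on rectangles, expressed on cut decompositions. -/
def SigmaRel (l' r' : Cut X) (b' t' : Cut Y) (l r : Cut X) (b t : Cut Y) : Prop :=
  l'.lower ⊆ l.lower ∧ b'.lower ⊆ b.lower ∧
    (r'.lower ⊂ r.lower ∨ t'.lower ⊂ t.lower ∨
      (r'.lower ⊆ r.lower ∧ t'.lower ⊆ t.lower))

/-- The relation `R' σ̊ R`: `R' σ R` and `R' ≠ R`. -/
def SigmaRelStrict (l' r' : Cut X) (b' t' : Cut Y) (l r : Cut X) (b t : Cut Y) : Prop :=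
  SigmaRel l' r' b' t' l r b t ∧ rectOf l' r' b' t' ≠ rectOf l r b t

/-- The interval (indicator) module of a single convex set. -/
noncomputable abbrev singleIntervalModule {P : Type} [Preorder P] (S : Set P)
    (hS : IsConvexSet S) : PersistenceModule K P :=
  intervalDirectSum K (fun _ : PUnit => S) (fun _ => hS)

/-! ## Inverse limits of the filtration, counting functor, rectangle filtrates -/

/-- The submodule of compatible sections of a persistence module over a subset of the poset
(the inverse limit of the corresponding restricted system). -/
noncomputable def compatSections {P : Type} [Preorder P] (M : PersistenceModule K P)
    (A : Set P) : Submodule K (∀ u : A, M.obj u.1) where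
  carrier := {v | ∀ (s u : A) (h : s.1 ≤ u.1), rho K M h (v s) = v u}
  add_mem' := by
    intro v w hv hw s u h
    show rho K M h (v s + w s) = v u + w u
    rw [map_add, hv s u h, hw s u h]
  zero_mem' := by
    intro s u h
    show rho K M h 0 = 0
    rw [map_zero]
  smul_mem' := by
    intro c v hv s u h
    show rho K M h (c • v s) = c • v u
    rw [map_smul, hv s u h]

/-- The projection from sections over `A` to the value at a point `u ∈ A`. -/
noncomputable def projAt {P : Type} [Preorder P] (M : PersistenceModule K P)
    (A : Set P) (u : P) (h : u ∈ A) : (∀ v : A, M.obj v.1) →ₗ[K] M.obj u :=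
  LinearMap.proj (⟨u, h⟩ : A)

variable {X Y : Type} [LinearOrder X] [LinearOrder Y]

/-- `L⁺ = lim_{u ∈ R} V⁺_{R,u}(M)`, realized as the compatible sections valued in the
pointwise filtration spaces. -/
noncomputable def limVplus (M : PersistenceModule K (X × Y)) (l r : Cut X) (b t : Cut Y) :
    Submodule K (∀ v : ↥(rectOf l r b t), M.obj v.1) :=
  compatSections K M (rectOf l r b t) ⊓
    Submodule.pi Set.univ (fun v : ↥(rectOf l r b t) => VplusAt K M l r b t v.1)

/-- `L⁻ = ⋂_{u ∈ R} π_u⁻¹(V⁻_{R,u}(M))` inside `L⁺`. -/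
noncomputable def limVminus (M : PersistenceModule K (X × Y)) (l r : Cut X) (b t : Cut Y) :
    Submodule K (∀ v : ↥(rectOf l r b t), M.obj v.1) :=
  limVplus K M l r b t ⊓
    Submodule.pi Set.univ (fun v : ↥(rectOf l r b t) => VminusAt K M l r b t v.1)

/-- The family of subspaces of `M` obtained by projecting a subspace `W` of the sections over
`A`: `u ↦ π_u(W)` for `u ∈ A`, and `0` elsewhere. -/
noncomputable def filtrateFam {P : Type} [Preorder P] (M : PersistenceModule K P) (A : Set P)
    (W : Submodule K (∀ v : A, M.obj v.1)) (u : P) : Submodule K (M.obj u) :=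
  ⨆ (h : u ∈ A), Submodule.map (projAt K M A u h) W

/-- `V⁻_{R,u}(M)` viewed as a submodule of `V⁺_{R,u}(M)`. -/
noncomputable def VminusIn (M : PersistenceModule K (X × Y)) (l r : Cut X) (b t : Cut Y)
    (u : X × Y) : Submodule K ↥(VplusAt K M l r b t u) :=
  Submodule.comap (VplusAt K M l r b t u).subtype (VminusAt K M l r b t u)

/-- The counting functor `C_R(M) = lim_{u ∈ R} V⁺_{R,u}(M) / V⁻_{R,u}(M)`, realized as the
submodule of families of cosets that are compatible under the induced transition maps. -/
noncomputable def countingSpace (M : PersistenceModule K (X × Y)) (l r : Cut X) (b t : Cut Y) :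
    Submodule K (∀ v : ↥(rectOf l r b t),
      (↥(VplusAt K M l r b t v.1) ⧸ VminusIn K M l r b t v.1)) where
  carrier := {q | ∀ (s u : ↥(rectOf l r b t)) (h : s.1 ≤ u.1),
    ∃ w : ↥(VplusAt K M l r b t s.1),
      Submodule.Quotient.mk w = q s ∧
      ∃ hw : rho K M h w.1 ∈ VplusAt K M l r b t u.1,
        Submodule.Quotient.mk (⟨rho K M h w.1, hw⟩ : ↥(VplusAt K M l r b t u.1)) = q u}
  zero_mem' := by
    intro s u h
    have hmem : rho K M h ((0 : ↥(VplusAt K M l r b t s.1)) : M.obj s.1) ∈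
        VplusAt K M l r b t u.1 := by
      rw [Submodule.coe_zero, map_zero]
      exact (VplusAt K M l r b t u.1).zero_mem
    refine ⟨0, by simp, hmem, ?_⟩
    have heq : (⟨rho K M h ((0 : ↥(VplusAt K M l r b t s.1)) : M.obj s.1), hmem⟩ :
        ↥(VplusAt K M l r b t u.1)) = 0 := by
      ext
      show rho K M h ((0 : ↥(VplusAt K M l r b t s.1)) : M.obj s.1) = (0 : M.obj u.1)
      rw [Submodule.coe_zero, map_zero]
    rw [heq]
    simp
  add_mem' := by
    intro q1 q2 hq1 hq2 s u h
    obtain ⟨w1, hw1, hmem1, hval1⟩ := hq1 s u h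
    obtain ⟨w2, hw2, hmem2, hval2⟩ := hq2 s u h
    have hmem : rho K M h ((w1 + w2 : ↥(VplusAt K M l r b t s.1)) : M.obj s.1) ∈
        VplusAt K M l r b t u.1 := by
      rw [Submodule.coe_add, map_add]
      exact (VplusAt K M l r b t u.1).add_mem hmem1 hmem2
    refine ⟨w1 + w2, ?_, hmem, ?_⟩
    · rw [Submodule.Quotient.mk_add, hw1, hw2]
      rfl
    · have heq : (⟨rho K M h ((w1 + w2 : ↥(VplusAt K M l r b t s.1)) : M.obj s.1), hmem⟩ :
          ↥(VplusAt K M l r b t u.1)) =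
          (⟨rho K M h w1.1, hmem1⟩ : ↥(VplusAt K M l r b t u.1)) +
          (⟨rho K M h w2.1, hmem2⟩ : ↥(VplusAt K M l r b t u.1)) := by
        ext
        show rho K M h ((w1 + w2 : ↥(VplusAt K M l r b t s.1)) : M.obj s.1) =
          rho K M h (w1 : M.obj s.1) + rho K M h (w2 : M.obj s.1)
        rw [Submodule.coe_add, map_add]
      rw [heq, Submodule.Quotient.mk_add, hval1, hval2]
      rfl
  smul_mem' := by
    intro c q hq s u h
    obtain ⟨w, hw, hmem, hval⟩ := hq s u h
    have hmem' : rho K M h ((c • w : ↥(VplusAt K M l r b t s.1)) : M.obj s.1) ∈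
        VplusAt K M l r b t u.1 := by
      rw [Submodule.coe_smul, map_smul]
      exact (VplusAt K M l r b t u.1).smul_mem c hmem
    refine ⟨c • w, ?_, hmem', ?_⟩
    · rw [Submodule.Quotient.mk_smul, hw]
      rfl
    · have heq : (⟨rho K M h ((c • w : ↥(VplusAt K M l r b t s.1)) : M.obj s.1), hmem'⟩ :
          ↥(VplusAt K M l r b t u.1)) =
          c • (⟨rho K M h w.1, hmem⟩ : ↥(VplusAt K M l r b t u.1)) := by
        ext
        show rho K M h ((c • w : ↥(VplusAt K M l r b t s.1)) : M.obj s.1) =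
          c • rho K M h (w : M.obj s.1)
        rw [Submodule.coe_smul, map_smul]
      rw [heq, Submodule.Quotient.mk_smul, hval]
      rfl

/-- The data of a rectangle filtrate of `M` for the rectangle determined by four cuts:
a choice of complement `W` of `L⁻` in `L⁺` computed inside the submodule `N = V⁺_R(M)`,
chosen inside `lim_{u∈R} (Ker⁺_{r,u}(N) ∩ Ker⁺_{t,u}(N))`. -/
structure RectangleFiltrate (M : PersistenceModule K (X × Y))
    (l r : Cut X) (b t : Cut Y) where
  W : Submodule K (∀ v : ↥(rectOf l r b t), (VplusMod K M l r b t).obj v.1)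
  le_lim : W ≤ limVplus K (VplusMod K M l r b t) l r b t
  le_ker : W ≤ Submodule.pi Set.univ (fun v : ↥(rectOf l r b t) =>
    KerPlusH K (VplusMod K M l r b t) r v.1 ⊓ KerPlusV K (VplusMod K M l r b t) t v.1)
  inf_eq : W ⊓ limVminus K (VplusMod K M l r b t) l r b t = ⊥
  sup_eq : W ⊔ limVminus K (VplusMod K M l r b t) l r b t =
    limVplus K (VplusMod K M l r b t) l r b t

/-- The subspace of `M` at index `u` determined by a rectangle filtrate (`π_u(W)` for
`u ∈ R` and `0` elsewhere, viewed inside `M` via the inclusion `V⁺_R(M) ⊆ M`). -/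
noncomputable def RectangleFiltrate.atPoint {M : PersistenceModule K (X × Y)}
    {l r : Cut X} {b t : Cut Y} (F : RectangleFiltrate K M l r b t) (u : X × Y) :
    Submodule K (M.obj u) :=
  Submodule.map (VplusSub K M l r b t u).subtype
    (filtrateFam K (VplusMod K M l r b t) (rectOf l r b t) F.W u)


section CosetTheory

variable {K : Type} [Field K] {V : Type} [AddCommGroup V] [Module K V]

/-- A coset of a submodule (affine subspace, possibly with fixed representation). -/
def IsKCoset (K : Type) [Field K] {V : Type} [AddCommGroup V] [Module K V]
    (S : Set V) : Prop :=
  ∃ (a : V) (p : Submodule K V), S = {x | x - a ∈ p}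

theorem IsKCoset.nonempty {S : Set V} (h : IsKCoset K S) : S.Nonempty := by
  obtain ⟨a, p, rfl⟩ := h
  exact ⟨a, by simp⟩

theorem IsKCoset.image {S : Set V} (h : IsKCoset K S) {V' : Type} [AddCommGroup V']
    [Module K V'] (f : V →ₗ[K] V') : IsKCoset K (f '' S) := by
  obtain ⟨a, p, rfl⟩ := h
  refine ⟨f a, p.map f, ?_⟩
  ext y
  constructor
  · rintro ⟨x, hx, rfl⟩
    exact ⟨x - a, hx, by simp⟩
  · rintro ⟨z, hz, hz2⟩
    exact ⟨a + z, by simpa using hz, by rw [map_add]; rw [show f z = y - f a from hz2]; abel⟩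

theorem IsKCoset.singleton (y : V) : IsKCoset K ({y} : Set V) :=
  ⟨y, ⊥, by ext x; simp [sub_eq_zero]⟩

theorem IsKCoset.inter {S T : Set V} (hS : IsKCoset K S) (hT : IsKCoset K T)
    (hne : (S ∩ T).Nonempty) : IsKCoset K (S ∩ T) := by
  obtain ⟨a, p, rfl⟩ := hS
  obtain ⟨b, q, rfl⟩ := hT
  obtain ⟨x₀, hx₀p, hx₀q⟩ := hne
  refine ⟨x₀, p ⊓ q, ?_⟩
  ext x
  simp only [Set.mem_inter_iff, Set.mem_setOf_eq, Submodule.mem_inf]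
  constructor
  · rintro ⟨h1, h2⟩
    exact ⟨by simpa using p.sub_mem h1 hx₀p, by simpa using q.sub_mem h2 hx₀q⟩
  · rintro ⟨h1, h2⟩
    exact ⟨by simpa using p.add_mem h1 hx₀p, by simpa using q.add_mem h2 hx₀q⟩

theorem IsKCoset.preimage {V' : Type} [AddCommGroup V'] [Module K V'] {S : Set V'}
    (hS : IsKCoset K S) (f : V →ₗ[K] V') (hne : (f ⁻¹' S).Nonempty) :
    IsKCoset K (f ⁻¹' S) := by
  obtain ⟨a, p, rfl⟩ := hS
  obtain ⟨x₀, hx₀⟩ := hne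
  refine ⟨x₀, p.comap f, ?_⟩
  ext x
  simp only [Set.mem_preimage, Set.mem_setOf_eq, Submodule.mem_comap, map_sub]
  constructor
  · intro h
    simpa using p.sub_mem h hx₀
  · intro h
    simpa using p.add_mem h hx₀

private theorem IsKCoset.rep_le {S T : Set V} {a b : V} {p q : Submodule K V}
    (hS : S = {x | x - a ∈ p}) (hT : T = {x | x - b ∈ q}) (hST : S ⊆ T) : p ≤ q := by
  intro x hx
  have ha : a ∈ T := hST (by simp [hS])
  have hax : a + x ∈ T := hST (by simp [hS, hx])
  rw [hT] at ha hax
  simpa using q.sub_mem hax ha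

private theorem IsKCoset.eq_of_rep_eq {S T : Set V} {a b : V} {p : Submodule K V}
    (hS : S = {x | x - a ∈ p}) (hT : T = {x | x - b ∈ p}) (hST : S ⊆ T) : S = T := by
  have ha : a ∈ T := hST (by simp [hS])
  rw [hT] at ha
  refine Set.Subset.antisymm hST fun y hy => ?_
  rw [hT] at hy
  rw [hS]
  simpa using p.sub_mem hy ha

/-- A downward-directed family of cosets in a finite-dimensional space has a
minimal member. -/
theorem exists_min_coset [FiniteDimensional K V] {ι : Type} [Nonempty ι] (A : ι → Set V)
    (hA : ∀ i, IsKCoset K (A i)) (hdir : ∀ i j, ∃ k, A k ⊆ A i ∧ A k ⊆ A j) :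
    ∃ i₀, ∀ i, A i₀ ⊆ A i := by
  choose a p hp using hA
  have hrange : (Set.range fun i => Module.finrank K (p i)).Nonempty := Set.range_nonempty _
  obtain ⟨i₀, hi₀⟩ := Nat.sInf_mem hrange
  refine ⟨i₀, fun i => ?_⟩
  obtain ⟨k, hk1, hk2⟩ := hdir i i₀
  have hle : p k ≤ p i₀ := IsKCoset.rep_le (hp k) (hp i₀) hk2
  have hfr : Module.finrank K (p i₀) ≤ Module.finrank K (p k) :=
    le_trans (le_of_eq hi₀) (Nat.sInf_le ⟨k, rfl⟩)
  have hpeq : p k = p i₀ := Submodule.eq_of_le_of_finrank_le hle hfr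
  have : A k = A i₀ := IsKCoset.eq_of_rep_eq (hp k) (hpeq ▸ hp i₀) hk2
  exact this ▸ hk1

end CosetTheory


section EvMachinery

variable (K : Type) [Field K] {P : Type} [Preorder P]

theorem rho_rho (M : PersistenceModule K P) {p q r : P} (h1 : p ≤ q) (h2 : q ≤ r)
    (x : M.obj p) : rho K M h2 (rho K M h1 x) = rho K M (h1.trans h2) x := by
  rw [← rho_comp K M h1 h2]; rfl

theorem rho_refl (M : PersistenceModule K P) (p : P) (x : M.obj p) :
    rho K M (le_refl p) x = x := by
  have h : homOfLE (le_refl p) = 𝟙 p := rfl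
  show (M.map (homOfLE (le_refl p))).hom x = x
  rw [h, M.map_id]
  rfl

variable (M : PersistenceModule K P) (S : Set P) (A : ∀ u : P, Set (M.obj u))

/-- The eventual image at `u` of the system of cosets `A` over `S`. -/
def evSet (u : P) : Set (M.obj u) :=
  ⋂ s : {s : P // s ∈ S ∧ s ≤ u}, rho K M s.2.2 '' A s.1

theorem evSet_exists_min
    (hdir : ∀ u ∈ S, ∀ v ∈ S, ∃ m ∈ S, m ≤ u ∧ m ≤ v)
    (hfd : ∀ u : P, FiniteDimensional K (M.obj u))
    (hA : ∀ u ∈ S, IsKCoset K (A u))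
    (hmap : ∀ (s u : P) (h : s ≤ u), s ∈ S → u ∈ S → rho K M h '' A s ⊆ A u)
    {u : P} (hu : u ∈ S) :
    ∃ s : {s : P // s ∈ S ∧ s ≤ u}, evSet K M S A u = rho K M s.2.2 '' A s.1 := by
  haveI : Nonempty {s : P // s ∈ S ∧ s ≤ u} := ⟨⟨u, hu, le_rfl⟩⟩
  haveI := hfd u
  have key : ∀ (s s' : {s : P // s ∈ S ∧ s ≤ u}) (h : s.1 ≤ s'.1),
      rho K M s.2.2 '' A s.1 ⊆ rho K M s'.2.2 '' A s'.1 := by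
    rintro s s' h x ⟨a, ha, rfl⟩
    refine ⟨rho K M h a, hmap _ _ h s.2.1 s'.2.1 ⟨a, ha, rfl⟩, ?_⟩
    rw [rho_rho]
  obtain ⟨s₀, hs₀⟩ := exists_min_coset (fun s : {s : P // s ∈ S ∧ s ≤ u} =>
    rho K M s.2.2 '' A s.1)
    (fun s => (hA s.1 s.2.1).image _)
    (by
      intro s s'
      obtain ⟨m, hm, hms, hms'⟩ := hdir s.1 s.2.1 s'.1 s'.2.1
      exact ⟨⟨m, hm, hms.trans s.2.2⟩, key _ s hms, key _ s' hms'⟩)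
  refine ⟨s₀, Set.Subset.antisymm (Set.iInter_subset _ s₀) (Set.subset_iInter hs₀)⟩

theorem evSet_coset
    (hdir : ∀ u ∈ S, ∀ v ∈ S, ∃ m ∈ S, m ≤ u ∧ m ≤ v)
    (hfd : ∀ u : P, FiniteDimensional K (M.obj u))
    (hA : ∀ u ∈ S, IsKCoset K (A u))
    (hmap : ∀ (s u : P) (h : s ≤ u), s ∈ S → u ∈ S → rho K M h '' A s ⊆ A u)
    {u : P} (hu : u ∈ S) : IsKCoset K (evSet K M S A u) := by
  obtain ⟨s₀, hs₀⟩ := evSet_exists_min K M S A hdir hfd hA hmap hu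
  rw [hs₀]
  exact (hA s₀.1 s₀.2.1).image _

theorem evSet_subset_A {u : P} (hu : u ∈ S) : evSet K M S A u ⊆ A u := by
  intro x hx
  have := Set.mem_iInter.1 hx ⟨u, hu, le_rfl⟩
  obtain ⟨a, ha, rfl⟩ := this
  rwa [rho_refl]

theorem evSet_mapsTo
    (hdir : ∀ u ∈ S, ∀ v ∈ S, ∃ m ∈ S, m ≤ u ∧ m ≤ v)
    (hmap : ∀ (s u : P) (h : s ≤ u), s ∈ S → u ∈ S → rho K M h '' A s ⊆ A u)
    {s u : P} (hs : s ∈ S) (hu : u ∈ S) (h : s ≤ u) :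
    rho K M h '' evSet K M S A s ⊆ evSet K M S A u := by
  rintro x ⟨e, he, rfl⟩
  refine Set.mem_iInter.2 fun s' => ?_
  obtain ⟨m, hm, hms, hms'⟩ := hdir s hs s'.1 s'.2.1
  have h1 : e ∈ rho K M hms '' A m := Set.mem_iInter.1 he ⟨m, hm, hms⟩
  obtain ⟨a, ha, rfl⟩ := h1
  have hmu : m ≤ u := hms.trans h
  rw [rho_rho]
  have : rho K M hmu a = rho K M s'.2.2 (rho K M (hms'.trans (le_refl s'.1) : m ≤ s'.1) a) := by
    rw [rho_rho]
  rw [this]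
  exact ⟨_, hmap _ _ _ hm s'.2.1 ⟨a, ha, rfl⟩, rfl⟩

theorem evSet_surj
    (hdir : ∀ u ∈ S, ∀ v ∈ S, ∃ m ∈ S, m ≤ u ∧ m ≤ v)
    (hfd : ∀ u : P, FiniteDimensional K (M.obj u))
    (hA : ∀ u ∈ S, IsKCoset K (A u))
    (hmap : ∀ (s u : P) (h : s ≤ u), s ∈ S → u ∈ S → rho K M h '' A s ⊆ A u)
    {s u : P} (hs : s ∈ S) (hu : u ∈ S) (h : s ≤ u) :
    evSet K M S A u ⊆ rho K M h '' evSet K M S A s := by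
  obtain ⟨s₁, hs₁⟩ := evSet_exists_min K M S A hdir hfd hA hmap hs
  intro x hx
  have h1 : x ∈ rho K M (s₁.2.2.trans h) '' A s₁.1 :=
    Set.mem_iInter.1 hx ⟨s₁.1, s₁.2.1, s₁.2.2.trans h⟩
  obtain ⟨a, ha, rfl⟩ := h1
  refine ⟨rho K M s₁.2.2 a, ?_, by rw [rho_rho]⟩
  rw [hs₁]
  exact ⟨a, ha, rfl⟩

theorem evSet_nonempty
    (hdir : ∀ u ∈ S, ∀ v ∈ S, ∃ m ∈ S, m ≤ u ∧ m ≤ v)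
    (hfd : ∀ u : P, FiniteDimensional K (M.obj u))
    (hA : ∀ u ∈ S, IsKCoset K (A u))
    (hmap : ∀ (s u : P) (h : s ≤ u), s ∈ S → u ∈ S → rho K M h '' A s ⊆ A u)
    {u : P} (hu : u ∈ S) : (evSet K M S A u).Nonempty :=
  (evSet_coset K M S A hdir hfd hA hmap hu).nonempty

end EvMachinery

section ChainSection

variable (K : Type) [Field K] {P : Type} [Preorder P]
variable (M : PersistenceModule K P) (S : Set P) (A : ∀ u : P, Set (M.obj u))

/-- A "good" partial compatible section, encoded as a graph. -/
structure GoodGraph (Γ : Set ((u : P) × M.obj u)) : Prop where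
  mem_S : ∀ σ ∈ Γ, σ.1 ∈ S
  mem_ev : ∀ σ ∈ Γ, σ.2 ∈ evSet K M S A σ.1
  func : ∀ (u : P) (x y : M.obj u),
    (⟨u, x⟩ : (u : P) × M.obj u) ∈ Γ → (⟨u, y⟩ : (u : P) × M.obj u) ∈ Γ → x = y
  closed : ∀ σ ∈ Γ, ∀ v ∈ S, ∀ h : σ.1 ≤ v,
    (⟨v, rho K M h σ.2⟩ : (u : P) × M.obj u) ∈ Γ

/-- A compatible section through a system of cosets over a chain exists. -/
theorem chain_section
    (hch : ∀ u ∈ S, ∀ v ∈ S, u ≤ v ∨ v ≤ u)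
    (hfd : ∀ u : P, FiniteDimensional K (M.obj u))
    (hA : ∀ u ∈ S, IsKCoset K (A u))
    (hmap : ∀ (s u : P) (h : s ≤ u), s ∈ S → u ∈ S → rho K M h '' A s ⊆ A u) :
    ∃ f : ∀ u : P, M.obj u, (∀ u ∈ S, f u ∈ evSet K M S A u) ∧
      (∀ (s u : P) (h : s ≤ u), s ∈ S → u ∈ S → rho K M h (f s) = f u) := by
  have hdir : ∀ u ∈ S, ∀ v ∈ S, ∃ m ∈ S, m ≤ u ∧ m ≤ v := by
    intro u hu v hv
    rcases hch u hu v hv with h | h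
    · exact ⟨u, hu, le_rfl, h⟩
    · exact ⟨v, hv, h, le_rfl⟩
  -- Zorn's lemma on good graphs
  obtain ⟨Γ, hΓmax⟩ := zorn_subset {Γ | GoodGraph K M S A Γ} (by
    intro c hc hchain
    by_cases hne : c.Nonempty
    · refine ⟨⋃₀ c, ?_, fun s hs => Set.subset_sUnion_of_mem hs⟩
      constructor
      · rintro σ ⟨Γ', hΓ', hσ⟩
        exact (hc hΓ').mem_S σ hσ
      · rintro σ ⟨Γ', hΓ', hσ⟩
        exact (hc hΓ').mem_ev σ hσ
      · rintro u x y ⟨Γ₁, h₁, hx⟩ ⟨Γ₂, h₂, hy⟩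
        rcases eq_or_ne Γ₁ Γ₂ with rfl | hne12
        · exact (hc h₁).func u x y hx hy
        · rcases hchain h₁ h₂ hne12 with h | h
          · exact (hc h₂).func u x y (h hx) hy
          · exact (hc h₁).func u x y hx (h hy)
      · rintro σ ⟨Γ', hΓ', hσ⟩ v hv h
        exact ⟨Γ', hΓ', (hc hΓ').closed σ hσ v hv h⟩
    · refine ⟨∅, ?_, fun s hs => absurd ⟨s, hs⟩ hne⟩
      exact ⟨fun σ h => h.elim, fun σ h => h.elim, fun u x y h => h.elim,
        fun σ h => h.elim⟩)
  have hΓ : GoodGraph K M S A Γ := hΓmax.prop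
  -- the maximal graph is total on S
  have htotal : ∀ u ∈ S, ∃ x, (⟨u, x⟩ : (u : P) × M.obj u) ∈ Γ := by
    by_contra hcon
    push_neg at hcon
    obtain ⟨p, hp, hpdom⟩ := hcon
    -- the family of constraints at `p`
    set ι := Option {σ : (u : P) × M.obj u // σ ∈ Γ ∧ p ≤ σ.1} with hι
    haveI : Nonempty ι := ⟨none⟩
    haveI := hfd p
    set F : ι → Set (M.obj p) := fun i =>
      match i with
      | none => evSet K M S A p
      | some σ => evSet K M S A p ∩ rho K M σ.2.2 ⁻¹' {σ.1.2} with hF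
    have hFsub : ∀ i, F i ⊆ evSet K M S A p := by
      rintro (_ | σ)
      · exact le_rfl
      · exact Set.inter_subset_left
    have hFne : ∀ i, (F i).Nonempty := by
      rintro (_ | σ)
      · exact evSet_nonempty K M S A hdir hfd hA hmap hp
      · obtain ⟨e, he, hee⟩ := evSet_surj K M S A hdir hfd hA hmap hp
          (hΓ.mem_S σ.1 σ.2.1) σ.2.2 (hΓ.mem_ev σ.1 σ.2.1)
        exact ⟨e, he, by simpa using hee⟩
    have hFcoset : ∀ i, IsKCoset K (F i) := by
      rintro (_ | σ)
      · exact evSet_coset K M S A hdir hfd hA hmap hp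
      · refine IsKCoset.inter (evSet_coset K M S A hdir hfd hA hmap hp) ?_ (hFne (some σ))
        exact IsKCoset.preimage (IsKCoset.singleton _) _
          ((hFne (some σ)).mono Set.inter_subset_right)
    -- the constraint family is a chain under inclusion
    have hFmono : ∀ (σ τ : {σ : (u : P) × M.obj u // σ ∈ Γ ∧ p ≤ σ.1}),
        σ.1.1 ≤ τ.1.1 → F (some σ) ⊆ F (some τ) := by
      rintro σ τ h x ⟨hx, hfx⟩
      refine ⟨hx, ?_⟩
      have h1 : rho K M τ.2.2 x = rho K M h (rho K M σ.2.2 x) := by rw [rho_rho]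
      have h2 : rho K M σ.2.2 x = σ.1.2 := hfx
      have h3 : (⟨τ.1.1, rho K M h σ.1.2⟩ : (u : P) × M.obj u) ∈ Γ :=
        hΓ.closed σ.1 σ.2.1 τ.1.1 (hΓ.mem_S τ.1 τ.2.1) h
      have h4 : rho K M h σ.1.2 = τ.1.2 := by
        rcases τ with ⟨⟨v, xv⟩, hτ⟩
        exact hΓ.func v _ _ h3 hτ.1
      simp only [Set.mem_preimage, Set.mem_singleton_iff]
      rw [h1, h2, h4]
    have hFdir : ∀ i j, ∃ k, F k ⊆ F i ∧ F k ⊆ F j := by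
      rintro (_ | σ) (_ | τ)
      · exact ⟨none, le_rfl, le_rfl⟩
      · exact ⟨some τ, by intro x hx; exact hFsub (some τ) hx, le_rfl⟩
      · exact ⟨some σ, le_rfl, by intro x hx; exact hFsub (some σ) hx⟩
      · rcases hch σ.1.1 (hΓ.mem_S σ.1 σ.2.1) τ.1.1 (hΓ.mem_S τ.1 τ.2.1) with h | h
        · exact ⟨some σ, le_rfl, hFmono σ τ h⟩
        · exact ⟨some τ, hFmono τ σ h, le_rfl⟩
    obtain ⟨i₀, hi₀⟩ := exists_min_coset F hFcoset hFdir
    obtain ⟨y, hy⟩ := hFne i₀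
    have hyall : ∀ i, y ∈ F i := fun i => hi₀ i hy
    -- extend the graph
    set Γ' : Set ((u : P) × M.obj u) := Γ ∪
      {σ' | ∃ (v : P) (hv : v ∈ S) (h : p ≤ v),
        σ' = ⟨v, rho K M h y⟩} with hΓ'def
    have hyev : y ∈ evSet K M S A p := hFsub i₀ hy
    have hΓ'good : GoodGraph K M S A Γ' := by
      constructor
      · rintro σ (hσ | ⟨v, hv, h, rfl⟩)
        · exact hΓ.mem_S σ hσ
        · exact hv
      · rintro σ (hσ | ⟨v, hv, h, rfl⟩)
        · exact hΓ.mem_ev σ hσ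
        · exact evSet_mapsTo K M S A hdir hmap hp hv h ⟨y, hyev, rfl⟩
      · rintro u x x' (hx | ⟨v, hv, h, heq⟩) (hx' | ⟨v', hv', h', heq'⟩)
        · exact hΓ.func u x x' hx hx'
        · obtain ⟨rfl, hxe⟩ := Sigma.mk.inj_iff.1 heq'
          have := hyall (some ⟨⟨u, x⟩, hx, h'⟩)
          have hfib : rho K M h' y = x := this.2
          rw [eq_of_heq hxe]
          exact hfib.symm
        · obtain ⟨rfl, hxe⟩ := Sigma.mk.inj_iff.1 heq
          have := hyall (some ⟨⟨u, x'⟩, hx', h⟩)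
          have hfib : rho K M h y = x' := this.2
          rw [eq_of_heq hxe]
          exact hfib
        · obtain ⟨he1, hxe⟩ := Sigma.mk.inj_iff.1 heq
          subst he1
          obtain ⟨he2, hxe'⟩ := Sigma.mk.inj_iff.1 heq'
          subst he2
          rw [eq_of_heq hxe, eq_of_heq hxe']
      · rintro σ (hσ | ⟨v, hv, h, rfl⟩) w hw hle
        · exact Or.inl (hΓ.closed σ hσ w hw hle)
        · refine Or.inr ⟨w, hw, h.trans hle, ?_⟩
          congr 1
          rw [rho_rho]
    have hΓΓ' : Γ ⊆ Γ' := Set.subset_union_left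
    have : Γ' = Γ := Set.Subset.antisymm (hΓmax.le_of_ge hΓ'good hΓΓ') hΓΓ'
    apply hpdom (rho K M (le_refl p) y)
    rw [← this]
    exact Or.inr ⟨p, hp, le_refl p, rfl⟩
  -- extract the section
  classical
  refine ⟨fun u => if h : ∃ x, (⟨u, x⟩ : (u : P) × M.obj u) ∈ Γ then h.choose else 0,
    ?_, ?_⟩
  · intro u hu
    dsimp only
    rw [dif_pos (htotal u hu)]
    exact hΓ.mem_ev _ (htotal u hu).choose_spec
  · intro s u h hs hu
    dsimp only
    rw [dif_pos (htotal s hs), dif_pos (htotal u hu)]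
    exact hΓ.func u _ _
      (hΓ.closed _ (htotal s hs).choose_spec u hu h) (htotal u hu).choose_spec

end ChainSection

section GridSection

variable (K : Type) [Field K] {P : Type} [Preorder P]

theorem goodGraph_sUnion (M : PersistenceModule K P) (S : Set P)
    (A : ∀ u : P, Set (M.obj u)) (c : Set (Set ((u : P) × M.obj u)))
    (hc : ∀ Γ ∈ c, GoodGraph K M S A Γ) (hchain : IsChain (· ⊆ ·) c) :
    GoodGraph K M S A (⋃₀ c) := by
  constructor
  · rintro σ ⟨Γ', hΓ', hσ⟩
    exact (hc _ hΓ').mem_S σ hσ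
  · rintro σ ⟨Γ', hΓ', hσ⟩
    exact (hc _ hΓ').mem_ev σ hσ
  · rintro u x y ⟨Γ₁, h₁, hx⟩ ⟨Γ₂, h₂, hy⟩
    rcases eq_or_ne Γ₁ Γ₂ with rfl | hne12
    · exact (hc _ h₁).func u x y hx hy
    · rcases hchain h₁ h₂ hne12 with h | h
      · exact (hc _ h₂).func u x y (h hx) hy
      · exact (hc _ h₁).func u x y hx (h hy)
  · rintro σ ⟨Γ', hΓ', hσ⟩ v hv h
    exact ⟨Γ', hΓ', (hc _ hΓ').closed σ hσ v hv h⟩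

end GridSection

section GridMain

variable (K : Type) [Field K] {X Y : Type} [LinearOrder X] [LinearOrder Y]
variable (M : PersistenceModule K (X × Y)) (R : Set (X × Y)) (A : ∀ u : X × Y, Set (M.obj u))

/-- A compatible section through a system of cosets over a "product-like" subset
of a product of two linear orders. -/
theorem grid_section
    (hprod : ∀ u ∈ R, ∀ v ∈ R, ((u.1, v.2) : X × Y) ∈ R)
    (hfd : ∀ u : X × Y, FiniteDimensional K (M.obj u))
    (hA : ∀ u ∈ R, IsKCoset K (A u))
    (hmap : ∀ (s u : X × Y) (h : s ≤ u), s ∈ R → u ∈ R → rho K M h '' A s ⊆ A u) :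
    ∃ f : ∀ u : X × Y, M.obj u, (∀ u ∈ R, f u ∈ A u) ∧
      (∀ (s u : X × Y) (h : s ≤ u), s ∈ R → u ∈ R → rho K M h (f s) = f u) := by
  classical
  have hmeet : ∀ u ∈ R, ∀ v ∈ R,
      ((min u.1 v.1, min u.2 v.2) : X × Y) ∈ R ∧ (min u.1 v.1, min u.2 v.2) ≤ u ∧
        (min u.1 v.1, min u.2 v.2) ≤ v := by
    intro u hu v hv
    refine ⟨?_, ⟨min_le_left _ _, min_le_left _ _⟩, ⟨min_le_right _ _, min_le_right _ _⟩⟩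
    rcases min_choice u.1 v.1 with h1 | h1 <;> rcases min_choice u.2 v.2 with h2 | h2 <;>
      rw [h1, h2]
    · exact hprod u hu u hu
    · exact hprod u hu v hv
    · exact hprod v hv u hu
    · exact hprod v hv v hv
  have hdir : ∀ u ∈ R, ∀ v ∈ R, ∃ m ∈ R, m ≤ u ∧ m ≤ v := by
    intro u hu v hv
    obtain ⟨hm, h1, h2⟩ := hmeet u hu v hv
    exact ⟨_, hm, h1, h2⟩
  -- Zorn's lemma on good row-complete graphs
  obtain ⟨Γ, hΓmax⟩ := zorn_subset {Γ | GoodGraph K M R A Γ ∧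
      ∀ σ ∈ Γ, ∀ x' : X, ((x', σ.1.2) : X × Y) ∈ R →
        ∃ z, (⟨(x', σ.1.2), z⟩ : (u : X × Y) × M.obj u) ∈ Γ} (by
    intro c hc hchain
    by_cases hne : c.Nonempty
    · refine ⟨⋃₀ c, ⟨goodGraph_sUnion K M R A c (fun Γ h => (hc h).1) hchain, ?_⟩,
        fun s hs => Set.subset_sUnion_of_mem hs⟩
      rintro σ ⟨Γ', hΓ', hσ⟩ x' hx'
      obtain ⟨z, hz⟩ := (hc hΓ').2 σ hσ x' hx'
      exact ⟨z, Γ', hΓ', hz⟩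
    · refine ⟨∅, ⟨⟨fun σ h => h.elim, fun σ h => h.elim, fun u x y h => h.elim,
        fun σ h => h.elim⟩, fun σ h => h.elim⟩, fun s hs => absurd ⟨s, hs⟩ hne⟩)
  obtain ⟨hΓ, hΓrow⟩ := hΓmax.prop
  have htotal : ∀ u ∈ R, ∃ x, (⟨u, x⟩ : (u : X × Y) × M.obj u) ∈ Γ := by
    by_contra hcon
    push_neg at hcon
    obtain ⟨p, hp, hpdom⟩ := hcon
    -- the current row-chain at height `p.2`
    set Sc : Set (X × Y) := {u | u ∈ R ∧ u.2 = p.2} with hSc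
    have hScR : ∀ u ∈ Sc, u ∈ R := fun u hu => hu.1
    have hch : ∀ u ∈ Sc, ∀ v ∈ Sc, u ≤ v ∨ v ≤ u := by
      rintro u ⟨hu, hu2⟩ v ⟨hv, hv2⟩
      rcases le_total u.1 v.1 with h | h
      · exact Or.inl ⟨h, by rw [hu2, hv2]⟩
      · exact Or.inr ⟨h, by rw [hu2, hv2]⟩
    -- the constrained cosets on the row
    set Ac : ∀ u : X × Y, Set (M.obj u) := fun u =>
      evSet K M R A u ∩ ⋂ σ : {σ : (u : X × Y) × M.obj u // σ ∈ Γ ∧ u ≤ σ.1},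
        rho K M σ.2.2 ⁻¹' {σ.1.2} with hAc
    -- fibers over graph values are nonempty on the row
    have hfib_ne : ∀ u ∈ R, ∀ (σ : (u : X × Y) × M.obj u), σ ∈ Γ → ∀ h : u ≤ σ.1,
        ∃ e ∈ evSet K M R A u, rho K M h e = σ.2 := by
      intro u hu σ hσ h
      obtain ⟨e, he, hee⟩ := evSet_surj K M R A hdir hfd hA hmap hu
        (hΓ.mem_S σ hσ) h (hΓ.mem_ev σ hσ)
      exact ⟨e, he, hee⟩
    -- each constrained coset is the minimum of a directed family
    have hAc_min : ∀ u ∈ Sc, (Ac u).Nonempty ∧ IsKCoset K (Ac u) := by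
      intro u hu
      haveI := hfd u
      set ι := Option {σ : (u' : X × Y) × M.obj u' // σ ∈ Γ ∧ u ≤ σ.1} with hι
      haveI : Nonempty ι := ⟨none⟩
      set F : ι → Set (M.obj u) := fun i =>
        match i with
        | none => evSet K M R A u
        | some σ => evSet K M R A u ∩ rho K M σ.2.2 ⁻¹' {σ.1.2} with hF
      have hFsub : ∀ i, F i ⊆ evSet K M R A u := by
        rintro (_ | σ)
        · exact le_rfl
        · exact Set.inter_subset_left
      have hFne : ∀ i, (F i).Nonempty := by
        rintro (_ | σ)
        · exact evSet_nonempty K M R A hdir hfd hA hmap (hScR u hu)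
        · obtain ⟨e, he, hee⟩ := hfib_ne u (hScR u hu) σ.1 σ.2.1 σ.2.2
          exact ⟨e, he, by simpa using hee⟩
      have hFcoset : ∀ i, IsKCoset K (F i) := by
        rintro (_ | σ)
        · exact evSet_coset K M R A hdir hfd hA hmap (hScR u hu)
        · refine IsKCoset.inter (evSet_coset K M R A hdir hfd hA hmap (hScR u hu)) ?_
            (hFne (some σ))
          exact IsKCoset.preimage (IsKCoset.singleton _) _
            ((hFne (some σ)).mono Set.inter_subset_right)
      have hFmono : ∀ (σ τ : {σ : (u' : X × Y) × M.obj u' // σ ∈ Γ ∧ u ≤ σ.1})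
          (h : σ.1.1 ≤ τ.1.1), F (some σ) ⊆ F (some τ) := by
        rintro σ τ h x ⟨hx, hfx⟩
        refine ⟨hx, ?_⟩
        have h1 : rho K M τ.2.2 x = rho K M h (rho K M σ.2.2 x) := by rw [rho_rho]
        have h3 : (⟨τ.1.1, rho K M h σ.1.2⟩ : (u : X × Y) × M.obj u) ∈ Γ :=
          hΓ.closed σ.1 σ.2.1 τ.1.1 (hΓ.mem_S τ.1 τ.2.1) h
        have h4 : rho K M h σ.1.2 = τ.1.2 := by
          rcases τ with ⟨⟨v, xv⟩, hτ⟩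
          exact hΓ.func v _ _ h3 hτ.1
        simp only [Set.mem_preimage, Set.mem_singleton_iff]
        rw [h1, Set.mem_singleton_iff.1 hfx, h4]
      have hFdir : ∀ i j, ∃ k, F k ⊆ F i ∧ F k ⊆ F j := by
        rintro (_ | σ) (_ | τ)
        · exact ⟨none, le_rfl, le_rfl⟩
        · exact ⟨some τ, by intro x hx; exact hFsub (some τ) hx, le_rfl⟩
        · exact ⟨some σ, le_rfl, by intro x hx; exact hFsub (some σ) hx⟩
        · -- find a common element of Γ below both, using row-completeness
          obtain ⟨hmR, hm1, hm2⟩ := hmeet σ.1.1 (hΓ.mem_S σ.1 σ.2.1) τ.1.1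
            (hΓ.mem_S τ.1 τ.2.1)
          set m : X × Y := (min σ.1.1.1 τ.1.1.1, min σ.1.1.2 τ.1.1.2) with hm
          have hum : u ≤ m := ⟨le_min σ.2.2.1 τ.2.2.1, le_min σ.2.2.2 τ.2.2.2⟩
          -- m is in the domain of Γ by row-completeness
          have hmdom : ∃ z, (⟨m, z⟩ : (u : X × Y) × M.obj u) ∈ Γ := by
            rcases min_choice σ.1.1.2 τ.1.1.2 with h2 | h2
            · have hmeq : m = (m.1, σ.1.1.2) := congrArg _ h2
              rw [hmeq]
              exact hΓrow σ.1 σ.2.1 m.1 (hmeq ▸ hmR)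
            · have hmeq : m = (m.1, τ.1.1.2) := congrArg _ h2
              rw [hmeq]
              exact hΓrow τ.1 τ.2.1 m.1 (hmeq ▸ hmR)
          obtain ⟨z, hz⟩ := hmdom
          set μ : {σ : (u' : X × Y) × M.obj u' // σ ∈ Γ ∧ u ≤ σ.1} := ⟨⟨m, z⟩, hz, hum⟩
          exact ⟨some μ, hFmono μ σ hm1, hFmono μ τ hm2⟩
      obtain ⟨i₀, hi₀⟩ := exists_min_coset F hFcoset hFdir
      have hAcF : Ac u = F i₀ := by
        apply Set.Subset.antisymm
        · intro x hx
          cases i₀ with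
          | none => exact hx.1
          | some σ => exact ⟨hx.1, Set.mem_iInter.1 hx.2 σ⟩
        · intro x hx
          refine ⟨hFsub i₀ hx, Set.mem_iInter.2 fun σ => (hi₀ (some σ) hx).2⟩
      rw [hAcF]
      exact ⟨hFne i₀, hFcoset i₀⟩
    -- the constrained cosets are mapped into each other along the row
    have hAc_map : ∀ (s u : X × Y) (h : s ≤ u), s ∈ Sc → u ∈ Sc →
        rho K M h '' Ac s ⊆ Ac u := by
      rintro s u h hs hu x ⟨e, ⟨hev, hfib⟩, rfl⟩
      constructor
      · exact evSet_mapsTo K M R A hdir hmap (hScR s hs) (hScR u hu) h ⟨e, hev, rfl⟩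
      · refine Set.mem_iInter.2 fun σ => ?_
        have h1 : rho K M σ.2.2 (rho K M h e) = rho K M (h.trans σ.2.2) e := by
          rw [rho_rho]
        have h2 := Set.mem_iInter.1 hfib ⟨σ.1, σ.2.1, h.trans σ.2.2⟩
        simp only [Set.mem_preimage, Set.mem_singleton_iff] at h2 ⊢
        rw [h1, h2]
    -- a compatible section along the row
    obtain ⟨g, hg_ev, hg_compat⟩ := chain_section K M Sc Ac hch hfd
      (fun u hu => (hAc_min u hu).2) hAc_map
    have hgAc : ∀ u ∈ Sc, g u ∈ Ac u := fun u hu =>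
      evSet_subset_A K M Sc Ac hu (hg_ev u hu)
    -- extend the graph by the pushforward of the row section
    set Γ' : Set ((u : X × Y) × M.obj u) := Γ ∪
      {σ' | ∃ (u' : X × Y) (hu' : u' ∈ Sc) (v : X × Y) (hv : v ∈ R) (h : u' ≤ v),
        σ' = ⟨v, rho K M h (g u')⟩} with hΓ'def
    have hΓΓ' : Γ ⊆ Γ' := Set.subset_union_left
    have hnew_val : ∀ (u' : X × Y), u' ∈ Sc → ∀ (u : X × Y) (x : M.obj u),
        (⟨u, x⟩ : (u : X × Y) × M.obj u) ∈ Γ → ∀ h : u' ≤ u,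
        rho K M h (g u') = x := by
      intro u' hu' u x hx h
      have := (hgAc u' hu').2
      have h2 := Set.mem_iInter.1 this ⟨⟨u, x⟩, hx, h⟩
      simpa using h2
    have hΓ'good : GoodGraph K M R A Γ' := by
      constructor
      · rintro σ (hσ | ⟨u', hu', v, hv, h, rfl⟩)
        · exact hΓ.mem_S σ hσ
        · exact hv
      · rintro σ (hσ | ⟨u', hu', v, hv, h, rfl⟩)
        · exact hΓ.mem_ev σ hσ
        · exact evSet_mapsTo K M R A hdir hmap (hScR u' hu') hv h
            ⟨g u', (hgAc u' hu').1, rfl⟩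
      · rintro u x x' (hx | ⟨u₁, hu₁, v, hv, h, heq⟩) (hx' | ⟨u₂, hu₂, v', hv', h', heq'⟩)
        · exact hΓ.func u x x' hx hx'
        · obtain ⟨he2, hxe'⟩ := Sigma.mk.inj_iff.1 heq'
          subst he2
          rw [eq_of_heq hxe']
          exact (hnew_val u₂ hu₂ u x hx h').symm
        · obtain ⟨he1, hxe⟩ := Sigma.mk.inj_iff.1 heq
          subst he1
          rw [eq_of_heq hxe]
          exact hnew_val u₁ hu₁ u x' hx' h
        · obtain ⟨he1, hxe⟩ := Sigma.mk.inj_iff.1 heq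
          subst he1
          obtain ⟨he2, hxe'⟩ := Sigma.mk.inj_iff.1 heq'
          subst he2
          rw [eq_of_heq hxe, eq_of_heq hxe']
          rcases hch u₁ hu₁ u₂ hu₂ with h12 | h12
          · rw [← hg_compat u₁ u₂ h12 hu₁ hu₂, rho_rho]
          · rw [← hg_compat u₂ u₁ h12 hu₂ hu₁, rho_rho]
      · rintro σ (hσ | ⟨u', hu', v, hv, h, rfl⟩) w hw hle
        · exact Or.inl (hΓ.closed σ hσ w hw hle)
        · refine Or.inr ⟨u', hu', w, hw, h.trans hle, ?_⟩
          congr 1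
          rw [rho_rho]
    have hΓ'row : ∀ σ ∈ Γ', ∀ x' : X, ((x', σ.1.2) : X × Y) ∈ R →
        ∃ z, (⟨(x', σ.1.2), z⟩ : (u : X × Y) × M.obj u) ∈ Γ' := by
      rintro σ (hσ | ⟨u', hu', v, hv, h, rfl⟩) x' hx'
      · obtain ⟨z, hz⟩ := hΓrow σ hσ x' hx'
        exact ⟨z, Or.inl hz⟩
      · -- new row: use the row section pushed from `(x', p.2)`
        have hu''R : ((x', p.2) : X × Y) ∈ R := hprod (x', v.2) hx' p hp
        have hu''Sc : ((x', p.2) : X × Y) ∈ Sc := ⟨hu''R, rfl⟩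
        have hle : ((x', p.2) : X × Y) ≤ (x', v.2) := ⟨le_rfl, hu'.2 ▸ h.2⟩
        exact ⟨rho K M hle (g (x', p.2)),
          Or.inr ⟨(x', p.2), hu''Sc, (x', v.2), hx', hle, rfl⟩⟩
    have hΓ'max : Γ' = Γ :=
      Set.Subset.antisymm (hΓmax.le_of_ge ⟨hΓ'good, hΓ'row⟩ hΓΓ') hΓΓ'
    have hpSc : p ∈ Sc := ⟨hp, rfl⟩
    apply hpdom (rho K M (le_refl p) (g p))
    rw [← hΓ'max]
    exact Or.inr ⟨p, hpSc, p, hp, le_refl p, rfl⟩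
  -- extract the section
  refine ⟨fun u => if h : ∃ x, (⟨u, x⟩ : (u : X × Y) × M.obj u) ∈ Γ then h.choose else 0,
    ?_, ?_⟩
  · intro u hu
    dsimp only
    rw [dif_pos (htotal u hu)]
    exact evSet_subset_A K M R A hu (hΓ.mem_ev _ (htotal u hu).choose_spec)
  · intro s u h hs hu
    dsimp only
    rw [dif_pos (htotal s hs), dif_pos (htotal u hu)]
    exact hΓ.func u _ _
      (hΓ.closed _ (htotal s hs).choose_spec u hu h) (htotal u hu).choose_spec

end GridMain

section MappingLemmas

variable (K : Type) [Field K] {X Y : Type} [LinearOrder X] [LinearOrder Y]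
variable (M : PersistenceModule K (X × Y))

theorem range_le_range_of_factor {a c u : X × Y} (h1 : a ≤ c) (h2 : c ≤ u) :
    LinearMap.range (rho K M (h1.trans h2)) ≤ LinearMap.range (rho K M h2) := by
  rintro y ⟨z, rfl⟩
  exact ⟨rho K M h1 z, by rw [rho_rho]⟩

theorem ker_le_ker_of_factor {u c d : X × Y} (h1 : u ≤ c) (h2 : c ≤ d) :
    LinearMap.ker (rho K M h1) ≤ LinearMap.ker (rho K M (h1.trans h2)) := by
  intro z hz
  have : rho K M (h1.trans h2) z = rho K M h2 (rho K M h1 z) := by rw [rho_rho]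
  simp only [SetLike.mem_coe, LinearMap.mem_ker] at hz ⊢
  rw [this, hz, map_zero]

variable (l r : Cut X) (b t : Cut Y)

theorem map_ImPlusH {s u : X × Y} (h : s ≤ u) :
    Submodule.map (rho K M h) (ImPlusH K M l s) ≤ ImPlusH K M l u := by
  rintro y ⟨z, hz, rfl⟩
  rw [ImPlusH, Submodule.mem_iInf]
  intro x
  rw [Submodule.mem_iInf]
  rintro ⟨hxl, hxu⟩
  by_cases hxs : x ≤ s.1
  · simp only [ImPlusH, SetLike.mem_coe, Submodule.mem_iInf] at hz
    obtain ⟨a, rfl⟩ := hz x ⟨hxl, hxs⟩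
    refine ⟨rho K M (show ((x, s.2) : X × Y) ≤ (x, u.2) from ⟨le_rfl, h.2⟩) a, ?_⟩
    rw [rho_rho, rho_rho]
  · have hsx : s ≤ ((x, u.2) : X × Y) := ⟨le_of_not_ge hxs, h.2⟩
    refine ⟨rho K M hsx z, ?_⟩
    rw [rho_rho]

theorem map_ImPlusV {s u : X × Y} (h : s ≤ u) :
    Submodule.map (rho K M h) (ImPlusV K M b s) ≤ ImPlusV K M b u := by
  rintro y ⟨z, hz, rfl⟩
  rw [ImPlusV, Submodule.mem_iInf]
  intro x
  rw [Submodule.mem_iInf]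
  rintro ⟨hxb, hxu⟩
  by_cases hxs : x ≤ s.2
  · simp only [ImPlusV, SetLike.mem_coe, Submodule.mem_iInf] at hz
    obtain ⟨a, rfl⟩ := hz x ⟨hxb, hxs⟩
    refine ⟨rho K M (show ((s.1, x) : X × Y) ≤ (u.1, x) from ⟨h.1, le_rfl⟩) a, ?_⟩
    rw [rho_rho, rho_rho]
  · have hsx : s ≤ ((u.1, x) : X × Y) := ⟨h.1, le_of_not_ge hxs⟩
    refine ⟨rho K M hsx z, ?_⟩
    rw [rho_rho]

theorem map_ImMinusH {s u : X × Y} (h : s ≤ u) :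
    Submodule.map (rho K M h) (ImMinusH K M l s) ≤ ImMinusH K M l u := by
  rw [ImMinusH, Submodule.map_iSup]
  refine iSup_le fun x => ?_
  rw [Submodule.map_iSup]
  refine iSup_le ?_
  rintro ⟨hxl, hxs⟩
  refine le_trans ?_ (le_iSup_of_le x (le_iSup_of_le ⟨hxl, hxs.trans h.1⟩ le_rfl))
  rintro y ⟨z, ⟨a, rfl⟩, rfl⟩
  refine ⟨rho K M (show ((x, s.2) : X × Y) ≤ (x, u.2) from ⟨le_rfl, h.2⟩) a, ?_⟩
  rw [rho_rho, rho_rho]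

theorem map_ImMinusV {s u : X × Y} (h : s ≤ u) :
    Submodule.map (rho K M h) (ImMinusV K M b s) ≤ ImMinusV K M b u := by
  rw [ImMinusV, Submodule.map_iSup]
  refine iSup_le fun x => ?_
  rw [Submodule.map_iSup]
  refine iSup_le ?_
  rintro ⟨hxb, hxs⟩
  refine le_trans ?_ (le_iSup_of_le x (le_iSup_of_le ⟨hxb, hxs.trans h.2⟩ le_rfl))
  rintro y ⟨z, ⟨a, rfl⟩, rfl⟩
  refine ⟨rho K M (show ((s.1, x) : X × Y) ≤ (u.1, x) from ⟨h.1, le_rfl⟩) a, ?_⟩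
  rw [rho_rho, rho_rho]

theorem map_KerPlusH {s u : X × Y} (h : s ≤ u) :
    Submodule.map (rho K M h) (KerPlusH K M r s) ≤ KerPlusH K M r u := by
  rintro y ⟨z, hz, rfl⟩
  rw [KerPlusH, Submodule.mem_iInf]
  intro x
  rw [Submodule.mem_iInf]
  rintro ⟨hxr, hxu⟩
  simp only [KerPlusH, SetLike.mem_coe, Submodule.mem_iInf] at hz
  have hzx := hz x ⟨hxr, h.1.trans hxu⟩
  simp only [LinearMap.mem_ker] at hzx ⊢
  have h1 : rho K M (show u ≤ ((x, u.2) : X × Y) from ⟨hxu, le_rfl⟩) (rho K M h z) =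
      rho K M (show s ≤ ((x, u.2) : X × Y) from ⟨h.1.trans hxu, h.2⟩) z := by rw [rho_rho]
  have h2 : rho K M (show s ≤ ((x, u.2) : X × Y) from ⟨h.1.trans hxu, h.2⟩) z =
      rho K M (show ((x, s.2) : X × Y) ≤ (x, u.2) from ⟨le_rfl, h.2⟩)
        (rho K M (show s ≤ ((x, s.2) : X × Y) from ⟨h.1.trans hxu, le_rfl⟩) z) := by
    rw [rho_rho]
  rw [h1, h2, hzx, map_zero]

theorem map_KerPlusV {s u : X × Y} (h : s ≤ u) :
    Submodule.map (rho K M h) (KerPlusV K M t s) ≤ KerPlusV K M t u := by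
  rintro y ⟨z, hz, rfl⟩
  rw [KerPlusV, Submodule.mem_iInf]
  intro x
  rw [Submodule.mem_iInf]
  rintro ⟨hxt, hxu⟩
  simp only [KerPlusV, SetLike.mem_coe, Submodule.mem_iInf] at hz
  have hzx := hz x ⟨hxt, h.2.trans hxu⟩
  simp only [LinearMap.mem_ker] at hzx ⊢
  have h1 : rho K M (show u ≤ ((u.1, x) : X × Y) from ⟨le_rfl, hxu⟩) (rho K M h z) =
      rho K M (show s ≤ ((u.1, x) : X × Y) from ⟨h.1, h.2.trans hxu⟩) z := by rw [rho_rho]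
  have h2 : rho K M (show s ≤ ((u.1, x) : X × Y) from ⟨h.1, h.2.trans hxu⟩) z =
      rho K M (show ((s.1, x) : X × Y) ≤ (u.1, x) from ⟨h.1, le_rfl⟩)
        (rho K M (show s ≤ ((s.1, x) : X × Y) from ⟨le_rfl, h.2.trans hxu⟩) z) := by
    rw [rho_rho]
  rw [h1, h2, hzx, map_zero]

theorem map_KerMinusH {s u : X × Y} (h : s ≤ u) :
    Submodule.map (rho K M h) (KerMinusH K M r s) ≤ KerMinusH K M r u := by
  rw [KerMinusH, Submodule.map_iSup]
  refine iSup_le fun x => ?_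
  rw [Submodule.map_iSup]
  refine iSup_le ?_
  rintro ⟨hxr, hxs⟩
  by_cases hxu : u.1 ≤ x
  · refine le_trans ?_ (le_iSup_of_le x (le_iSup_of_le ⟨hxr, hxu⟩ le_rfl))
    rintro y ⟨z, hz, rfl⟩
    simp only [SetLike.mem_coe, LinearMap.mem_ker] at hz ⊢
    have h1 : rho K M (show u ≤ ((x, u.2) : X × Y) from ⟨hxu, le_rfl⟩) (rho K M h z) =
        rho K M (show ((x, s.2) : X × Y) ≤ (x, u.2) from ⟨le_rfl, h.2⟩)
          (rho K M (show s ≤ ((x, s.2) : X × Y) from ⟨hxs, le_rfl⟩) z) := by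
      rw [rho_rho, rho_rho]
    rw [h1, hz, map_zero]
  · rintro y ⟨z, hz, rfl⟩
    simp only [SetLike.mem_coe, LinearMap.mem_ker] at hz
    have h1 : rho K M h z =
        rho K M (show ((x, s.2) : X × Y) ≤ u from ⟨le_of_not_ge hxu, h.2⟩)
          (rho K M (show s ≤ ((x, s.2) : X × Y) from ⟨hxs, le_rfl⟩) z) := by
      rw [rho_rho]
    rw [h1, hz, map_zero]
    exact Submodule.zero_mem _

theorem map_KerMinusV {s u : X × Y} (h : s ≤ u) :
    Submodule.map (rho K M h) (KerMinusV K M t s) ≤ KerMinusV K M t u := by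
  rw [KerMinusV, Submodule.map_iSup]
  refine iSup_le fun x => ?_
  rw [Submodule.map_iSup]
  refine iSup_le ?_
  rintro ⟨hxt, hxs⟩
  by_cases hxu : u.2 ≤ x
  · refine le_trans ?_ (le_iSup_of_le x (le_iSup_of_le ⟨hxt, hxu⟩ le_rfl))
    rintro y ⟨z, hz, rfl⟩
    simp only [SetLike.mem_coe, LinearMap.mem_ker] at hz ⊢
    have h1 : rho K M (show u ≤ ((u.1, x) : X × Y) from ⟨le_rfl, hxu⟩) (rho K M h z) =
        rho K M (show ((s.1, x) : X × Y) ≤ (u.1, x) from ⟨h.1, le_rfl⟩)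
          (rho K M (show s ≤ ((s.1, x) : X × Y) from ⟨le_rfl, hxs⟩) z) := by
      rw [rho_rho, rho_rho]
    rw [h1, hz, map_zero]
  · rintro y ⟨z, hz, rfl⟩
    simp only [SetLike.mem_coe, LinearMap.mem_ker] at hz
    have h1 : rho K M h z =
        rho K M (show ((s.1, x) : X × Y) ≤ u from ⟨h.1, le_of_not_ge hxu⟩)
          (rho K M (show s ≤ ((s.1, x) : X × Y) from ⟨le_rfl, hxs⟩) z) := by
      rw [rho_rho]
    rw [h1, hz, map_zero]
    exact Submodule.zero_mem _

theorem map_ImPlusR {s u : X × Y} (h : s ≤ u) :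
    Submodule.map (rho K M h) (ImPlusR K M l b s) ≤ ImPlusR K M l b u :=
  le_trans (Submodule.map_inf_le _) (inf_le_inf (map_ImPlusH K M l h) (map_ImPlusV K M b h))

theorem map_ImMinusR {s u : X × Y} (h : s ≤ u) :
    Submodule.map (rho K M h) (ImMinusR K M l b s) ≤ ImMinusR K M l b u := by
  refine le_trans (Submodule.map_inf_le _) (inf_le_inf ?_ (map_ImPlusR K M l b h))
  rw [Submodule.map_sup]
  exact sup_le_sup (map_ImMinusH K M l h) (map_ImMinusV K M b h)

theorem map_KerPlusR {s u : X × Y} (h : s ≤ u) :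
    Submodule.map (rho K M h) (KerPlusR K M r t s) ≤ KerPlusR K M r t u := by
  refine le_trans (Submodule.map_inf_le _) (inf_le_inf ?_ ?_) <;> rw [Submodule.map_sup]
  · exact sup_le_sup (map_KerPlusH K M r h) (map_KerMinusV K M t h)
  · exact sup_le_sup (map_KerMinusH K M r h) (map_KerPlusV K M t h)

theorem map_KerMinusR {s u : X × Y} (h : s ≤ u) :
    Submodule.map (rho K M h) (KerMinusR K M r t s) ≤ KerMinusR K M r t u := by
  rw [KerMinusR, Submodule.map_sup]
  exact sup_le_sup (map_KerMinusH K M r h) (map_KerMinusV K M t h)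

theorem map_VplusAt {s u : X × Y} (h : s ≤ u) :
    Submodule.map (rho K M h) (VplusAt K M l r b t s) ≤ VplusAt K M l r b t u :=
  le_trans (Submodule.map_inf_le _)
    (inf_le_inf (map_ImPlusR K M l b h) (map_KerPlusR K M r t h))

theorem map_VminusAt {s u : X × Y} (h : s ≤ u) :
    Submodule.map (rho K M h) (VminusAt K M l r b t s) ≤ VminusAt K M l r b t u := by
  rw [VminusAt, Submodule.map_sup]
  refine sup_le_sup ?_ ?_
  · exact le_trans (Submodule.map_inf_le _)
      (inf_le_inf (map_ImPlusR K M l b h) (map_KerMinusR K M r t h))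
  · exact le_trans (Submodule.map_inf_le _)
      (inf_le_inf (map_ImMinusR K M l b h) (map_KerPlusR K M r t h))

theorem kerMinusH_le_kerPlusH (u : X × Y) : KerMinusH K M r u ≤ KerPlusH K M r u := by
  refine iSup_le fun x => iSup_le ?_
  rintro ⟨hxr, hxu⟩
  rw [KerPlusH]
  refine le_iInf fun x' => le_iInf ?_
  rintro ⟨hx'r, hx'u⟩
  have hxx' : x ≤ x' := le_of_lt (r.lt x hxr x' hx'r)
  exact ker_le_ker_of_factor K M (show u ≤ ((x, u.2) : X × Y) from ⟨hxu, le_rfl⟩)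
    (show ((x, u.2) : X × Y) ≤ (x', u.2) from ⟨hxx', le_rfl⟩)

theorem kerMinusV_le_kerPlusV (u : X × Y) : KerMinusV K M t u ≤ KerPlusV K M t u := by
  refine iSup_le fun x => iSup_le ?_
  rintro ⟨hxt, hxu⟩
  rw [KerPlusV]
  refine le_iInf fun x' => le_iInf ?_
  rintro ⟨hx't, hx'u⟩
  have hxx' : x ≤ x' := le_of_lt (t.lt x hxt x' hx't)
  exact ker_le_ker_of_factor K M (show u ≤ ((u.1, x) : X × Y) from ⟨le_rfl, hxu⟩)
    (show ((u.1, x) : X × Y) ≤ (u.1, x') from ⟨le_rfl, hxx'⟩)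

theorem kerMinusR_le_kerPlusR (u : X × Y) : KerMinusR K M r t u ≤ KerPlusR K M r t u := by
  refine sup_le (le_inf ?_ ?_) (le_inf ?_ ?_)
  · exact le_sup_of_le_left (kerMinusH_le_kerPlusH K M r u)
  · exact le_sup_left
  · exact le_sup_right
  · exact le_sup_of_le_right (kerMinusV_le_kerPlusV K M t u)

theorem vminusAt_le_vplusAt (u : X × Y) :
    VminusAt K M l r b t u ≤ VplusAt K M l r b t u := by
  refine sup_le (inf_le_inf le_rfl (kerMinusR_le_kerPlusR K M r t u))
    (inf_le_inf inf_le_right le_rfl)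

end MappingLemmas

section RectangleCore

variable (K : Type) [Field K] {X Y : Type} [LinearOrder X] [LinearOrder Y]
variable (M : PersistenceModule K (X × Y)) (l r : Cut X) (b t : Cut Y)

theorem rectOf_prod : ∀ u ∈ rectOf l r b t, ∀ v ∈ rectOf l r b t,
    ((u.1, v.2) : X × Y) ∈ rectOf l r b t := by
  rintro u ⟨hu1, hu2⟩ v ⟨hv1, hv2⟩
  exact ⟨hu1, hv2⟩

/-- If a section in `lim V⁺` vanishes at one point of the rectangle, then all of its
components lie in `V⁻`. -/
theorem section_vminus_of_eval_zero (hwe : WeaklyExact K M)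
    (w : ∀ v : ↥(rectOf l r b t), M.obj v.1) (hw : w ∈ limVplus K M l r b t)
    (u₀ : ↥(rectOf l r b t)) (h0 : w u₀ = 0) :
    ∀ v : ↥(rectOf l r b t), w v ∈ VminusAt K M l r b t v.1 := by
  intro v
  have hwc : ∀ (s u : ↥(rectOf l r b t)) (h : s.1 ≤ u.1), rho K M h (w s) = w u := hw.1
  have hwp : ∀ u : ↥(rectOf l r b t), w u ∈ VplusAt K M l r b t u.1 := by
    intro u
    exact hw.2 u (Set.mem_univ u)
  set m : X × Y := (min v.1.1 u₀.1.1, min v.1.2 u₀.1.2) with hmdef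
  have hmR : m ∈ rectOf l r b t := by
    rcases min_choice v.1.1 u₀.1.1 with h1 | h1 <;> rcases min_choice v.1.2 u₀.1.2 with h2 | h2 <;>
      rw [hmdef, h1, h2]
    · exact rectOf_prod l r b t v.1 v.2 v.1 v.2
    · exact rectOf_prod l r b t v.1 v.2 u₀.1 u₀.2
    · exact rectOf_prod l r b t u₀.1 u₀.2 v.1 v.2
    · exact rectOf_prod l r b t u₀.1 u₀.2 u₀.1 u₀.2
  have hmv : m ≤ v.1 := ⟨min_le_left _ _, min_le_left _ _⟩
  have hmu : m ≤ u₀.1 := ⟨min_le_right _ _, min_le_right _ _⟩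
  set mm : ↥(rectOf l r b t) := ⟨m, hmR⟩
  have hker : w mm ∈ LinearMap.ker (rho K M hmu) := by
    rw [LinearMap.mem_ker]
    rw [hwc mm u₀ hmu, h0]
  rw [(hwe m u₀.1 hmu).2] at hker
  have hkerminus : w mm ∈ KerMinusR K M r t m := by
    have hle1 : LinearMap.ker (rho K M
        (show m ≤ ((u₀.1.1, m.2) : X × Y) from ⟨hmu.1, le_rfl⟩)) ≤
        KerMinusR K M r t m := le_sup_of_le_left
      (le_iSup_of_le u₀.1.1 (le_iSup_of_le ⟨u₀.2.1.2, hmu.1⟩ le_rfl))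
    have hle2 : LinearMap.ker (rho K M
        (show m ≤ ((m.1, u₀.1.2) : X × Y) from ⟨le_rfl, hmu.2⟩)) ≤
        KerMinusR K M r t m := le_sup_of_le_right
      (le_iSup_of_le u₀.1.2 (le_iSup_of_le ⟨u₀.2.2.2, hmu.2⟩ le_rfl))
    exact sup_le hle1 hle2 hker
  have hvm : w mm ∈ VminusAt K M l r b t m := by
    apply le_sup_left (a := ImPlusR K M l b m ⊓ KerMinusR K M r t m)
    exact ⟨(hwp mm).1, hkerminus⟩
  have := map_VminusAt K M l r b t hmv ⟨w mm, hvm, rfl⟩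
  rwa [hwc mm v hmv] at this

theorem eval_injective_on_W (hwe : WeaklyExact K M)
    (W : Submodule K (∀ v : ↥(rectOf l r b t), M.obj v.1))
    (hWle : W ≤ limVplus K M l r b t)
    (hWinf : W ⊓ limVminus K M l r b t = ⊥)
    (u₀ : ↥(rectOf l r b t)) (w : ∀ v : ↥(rectOf l r b t), M.obj v.1) (hwW : w ∈ W)
    (h0 : w u₀ = 0) : w = 0 := by
  have h1 : w ∈ limVminus K M l r b t := by
    refine Submodule.mem_inf.2 ⟨hWle hwW, ?_⟩
    refine Submodule.mem_pi.2 fun v _ => ?_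
    exact section_vminus_of_eval_zero K M l r b t hwe w (hWle hwW) u₀ h0 v
  have : w ∈ W ⊓ limVminus K M l r b t := Submodule.mem_inf.2 ⟨hwW, h1⟩
  rw [hWinf] at this
  simpa using this

/-- Surjectivity of `lim V⁺ → C_R(M)`: every compatible family of cosets lifts. -/
theorem counting_lift (hM : Pfd K M)
    (q : ∀ v : ↥(rectOf l r b t),
      (↥(VplusAt K M l r b t v.1) ⧸ VminusIn K M l r b t v.1))
    (hq : q ∈ countingSpace K M l r b t) :
    ∃ w ∈ limVplus K M l r b t, ∀ v : ↥(rectOf l r b t),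
      ∃ hv : w v ∈ VplusAt K M l r b t v.1,
        Submodule.Quotient.mk (⟨w v, hv⟩ : ↥(VplusAt K M l r b t v.1)) = q v := by
  classical
  set A : ∀ u : X × Y, Set (M.obj u) := fun u =>
    {x | ∃ (hu : u ∈ rectOf l r b t) (hm : x ∈ VplusAt K M l r b t u),
      Submodule.Quotient.mk (⟨x, hm⟩ : ↥(VplusAt K M l r b t u)) = q ⟨u, hu⟩} with hA
  -- basic coset description of `A u`
  have hcosetdesc : ∀ (u : X × Y) (hu : u ∈ rectOf l r b t)
      (w₀ : ↥(VplusAt K M l r b t u)),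
      Submodule.Quotient.mk w₀ = q ⟨u, hu⟩ →
      A u = {x | x - w₀.1 ∈ VminusAt K M l r b t u} := by
    intro u hu w₀ hw₀
    ext x
    simp only [hA, Set.mem_setOf_eq]
    constructor
    · rintro ⟨hu', hm, hmk⟩
      have : Submodule.Quotient.mk (p := VminusIn K M l r b t u)
          (⟨x, hm⟩ : ↥(VplusAt K M l r b t u)) =
          Submodule.Quotient.mk (p := VminusIn K M l r b t u) w₀ := by rw [hw₀, hmk]
      have h2 := (Submodule.Quotient.eq _).1 this
      simpa [VminusIn] using h2
    · intro hx
      have hm : x ∈ VplusAt K M l r b t u := by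
        have : x = w₀.1 + (x - w₀.1) := by abel
        rw [this]
        exact (VplusAt K M l r b t u).add_mem w₀.2
          (vminusAt_le_vplusAt K M l r b t u hx)
      refine ⟨hu, hm, ?_⟩
      rw [← hw₀]
      refine (Submodule.Quotient.eq _).2 ?_
      simpa [VminusIn] using hx
  have hAcoset : ∀ u ∈ rectOf l r b t, IsKCoset K (A u) := by
    intro u hu
    obtain ⟨w₀, hw₀, -⟩ := hq ⟨u, hu⟩ ⟨u, hu⟩ le_rfl
    exact ⟨w₀.1, VminusAt K M l r b t u, hcosetdesc u hu w₀ hw₀⟩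
  have hAmap : ∀ (s u : X × Y) (h : s ≤ u), s ∈ rectOf l r b t → u ∈ rectOf l r b t →
      rho K M h '' A s ⊆ A u := by
    intro s u h hs hu
    obtain ⟨w₁, hw₁, hw₁u, hw₁umk⟩ := hq ⟨s, hs⟩ ⟨u, hu⟩ h
    rintro y ⟨x, hx, rfl⟩
    have hdesc := hcosetdesc s hs w₁ hw₁
    rw [hdesc] at hx
    have hdiff : rho K M h x - rho K M h w₁.1 ∈ VminusAt K M l r b t u := by
      have : rho K M h x - rho K M h w₁.1 = rho K M h (x - w₁.1) := by
        rw [map_sub]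
      rw [this]
      exact map_VminusAt K M l r b t h ⟨x - w₁.1, hx, rfl⟩
    have hdescu := hcosetdesc u hu ⟨rho K M h w₁.1, hw₁u⟩ hw₁umk
    rw [hdescu]
    exact hdiff
  obtain ⟨f, hfA, hfc⟩ := grid_section K M (rectOf l r b t) A (rectOf_prod l r b t) hM
    hAcoset hAmap
  refine ⟨fun v => f v.1, ?_, ?_⟩
  · refine Submodule.mem_inf.2 ⟨?_, ?_⟩
    · intro s u h
      exact hfc s.1 u.1 h s.2 u.2
    · refine Submodule.mem_pi.2 fun v _ => ?_
      obtain ⟨hu, hm, -⟩ := hfA v.1 v.2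
      exact hm
  · intro v
    obtain ⟨hu, hm, hmk⟩ := hfA v.1 v.2
    exact ⟨hm, hmk⟩

end RectangleCore

section CountingEquiv

variable (K : Type) [Field K] {X Y : Type} [LinearOrder X] [LinearOrder Y]
variable (M : PersistenceModule K (X × Y)) (l r : Cut X) (b t : Cut Y)

set_option synthInstance.maxHeartbeats 1000000 in
set_option maxHeartbeats 1000000 in
/-- The complement `W` is isomorphic to the counting space. -/
theorem W_equiv_counting (hM : Pfd K M)
    (W : Submodule K (∀ v : ↥(rectOf l r b t), M.obj v.1))
    (hWle : W ≤ limVplus K M l r b t)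
    (hWinf : W ⊓ limVminus K M l r b t = ⊥)
    (hWsup : W ⊔ limVminus K M l r b t = limVplus K M l r b t) :
    Nonempty (↥W ≃ₗ[K] ↥(countingSpace K M l r b t)) := by
  classical
  have hmem : ∀ (w : ↥W) (v : ↥(rectOf l r b t)),
      w.1 v ∈ VplusAt K M l r b t v.1 := by
    intro w v
    exact (Submodule.mem_inf.1 (hWle w.2)).2 v (Set.mem_univ v)
  have hcompat : ∀ (w : ↥W) (s u : ↥(rectOf l r b t)) (h : s.1 ≤ u.1),
      rho K M h (w.1 s) = w.1 u := by
    intro w s u h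
    exact (Submodule.mem_inf.1 (hWle w.2)).1 s u h
  set ψ : ↥W →ₗ[K] ∀ v : ↥(rectOf l r b t),
      (↥(VplusAt K M l r b t v.1) ⧸ VminusIn K M l r b t v.1) :=
    LinearMap.pi (fun v => (VminusIn K M l r b t v.1).mkQ.comp
      (LinearMap.codRestrict (VplusAt K M l r b t v.1)
        ((LinearMap.proj v).comp W.subtype) (fun w => hmem w v))) with hψ
  have hψapp : ∀ (w : ↥W) (v : ↥(rectOf l r b t)),
      ψ w v = Submodule.Quotient.mk (⟨w.1 v, hmem w v⟩ :
        ↥(VplusAt K M l r b t v.1)) := fun w v => rfl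
  have hrange : ∀ w : ↥W, ψ w ∈ countingSpace K M l r b t := by
    intro w s u h
    have hc := hcompat w s u h
    have hw : rho K M h (w.1 s) ∈ VplusAt K M l r b t u.1 := by
      rw [hc]; exact hmem w u
    refine ⟨⟨w.1 s, hmem w s⟩, rfl, hw, ?_⟩
    have heq : (⟨rho K M h (w.1 s), hw⟩ : ↥(VplusAt K M l r b t u.1)) =
        ⟨w.1 u, hmem w u⟩ := Subtype.ext hc
    rw [heq, hψapp]
  set Φ : ↥W →ₗ[K] ↥(countingSpace K M l r b t) :=
    LinearMap.codRestrict (countingSpace K M l r b t) ψ hrange with hΦ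
  have hker : ∀ w : ↥W, Φ w = 0 → w = 0 := by
    intro w hw0
    have hψ0 : ∀ v : ↥(rectOf l r b t), ψ w v = 0 := by
      intro v
      have := congrArg Subtype.val hw0
      exact congrFun this v
    have hvm : ∀ v : ↥(rectOf l r b t), w.1 v ∈ VminusAt K M l r b t v.1 := by
      intro v
      have h1 := hψ0 v
      rw [hψapp] at h1
      have h2 := (Submodule.Quotient.mk_eq_zero _).1 h1
      simpa [VminusIn] using h2
    have h1 : w.1 ∈ limVminus K M l r b t := by
      refine Submodule.mem_inf.2 ⟨hWle w.2, ?_⟩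
      exact Submodule.mem_pi.2 fun v _ => hvm v
    have h2 : w.1 ∈ W ⊓ limVminus K M l r b t := Submodule.mem_inf.2 ⟨w.2, h1⟩
    rw [hWinf] at h2
    exact Subtype.ext (by simpa using h2)
  have hinj : Function.Injective Φ := by
    intro w1 w2 h
    have h0 : Φ (w1 - w2) = 0 := by rw [map_sub, h, sub_self]
    have := hker _ h0
    rwa [sub_eq_zero] at this
  have hsurj : Function.Surjective Φ := by
    intro c
    obtain ⟨w', hw'lim, hw'mk⟩ := counting_lift K M l r b t hM c.1 c.2
    rw [← hWsup] at hw'lim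
    obtain ⟨a, haW, bb, hbb, hab⟩ := Submodule.mem_sup.1 hw'lim
    have hbbv : ∀ v : ↥(rectOf l r b t), bb v ∈ VminusAt K M l r b t v.1 := by
      intro v
      exact (Submodule.mem_inf.1 hbb).2 v (Set.mem_univ v)
    refine ⟨⟨a, haW⟩, ?_⟩
    apply Subtype.ext
    funext v
    obtain ⟨hv, hmkv⟩ := hw'mk v
    have hval : (Φ ⟨a, haW⟩).1 v = Submodule.Quotient.mk
        (⟨a v, hmem ⟨a, haW⟩ v⟩ : ↥(VplusAt K M l r b t v.1)) := rfl
    rw [hval, ← hmkv]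
    refine (Submodule.Quotient.eq _).2 ?_
    have hdiff : a v - w' v = -(bb v) := by
      have := congrFun hab v
      have h2 : a v + bb v = w' v := this
      rw [← h2]; abel
    show (⟨a v, _⟩ : ↥(VplusAt K M l r b t v.1)) - ⟨w' v, hv⟩ ∈
      VminusIn K M l r b t v.1
    have : a v - w' v ∈ VminusAt K M l r b t v.1 := by
      rw [hdiff]
      exact (VminusAt K M l r b t v.1).neg_mem (hbbv v)
    simpa [VminusIn] using this
  exact ⟨LinearEquiv.ofBijective Φ ⟨hinj, hsurj⟩⟩

end CountingEquiv

section BuildIso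

variable (K : Type) [Field K]

set_option maxHeartbeats 1000000 in
set_option synthInstance.maxHeartbeats 1000000 in
theorem build_iso {P : Type} [Preorder P] (M : PersistenceModule K P) (A : Set P)
    (hA : IsConvexSet A) (W : Submodule K (∀ v : ↥A, M.obj v.1))
    (hfd : FiniteDimensional K ↥W)
    (hcompat : ∀ w ∈ W, ∀ (s u : ↥A) (h : s.1 ≤ u.1), rho K M h (w s) = w u)
    (hinj : ∀ (u : ↥A) (w : ∀ v : ↥A, M.obj v.1), w ∈ W → w u = 0 → w = 0)
    (hfam : ∀ (s u : P) (h : s ≤ u),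
      Submodule.map (rho K M h) (filtrateFam K M A W s) ≤ filtrateFam K M A W u)
    (n : ℕ) (hn : n = Module.finrank K ↥W) :
    Nonempty (subfunctor K M (filtrateFam K M A W) hfam ≅
      intervalDirectSum K (fun _ : Fin n => A) (fun _ => hA)) := by
  classical
  haveI := hfd
  set eW : ↥W ≃ₗ[K] (Fin n → K) :=
    (Module.finBasis K ↥W).equivFun.trans
      (LinearEquiv.funCongrLeft K K (finCongr hn)) with heW
  have hffmem : ∀ (u : P) (hu : u ∈ A),
      filtrateFam K M A W u = Submodule.map (projAt K M A u hu) W :=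
    fun u hu => iSup_pos hu
  have hffbot : ∀ (u : P), u ∉ A → filtrateFam K M A W u = ⊥ :=
    fun u hu => iSup_neg hu
  have hsubs : ∀ (u : P), u ∉ A → Subsingleton ↥(filtrateFam K M A W u) := by
    intro u hu
    refine ⟨fun x y => Subtype.ext ?_⟩
    have hle : filtrateFam K M A W u ≤ ⊥ := le_of_eq (hffbot u hu)
    rw [(Submodule.mem_bot K).1 (hle x.2), (Submodule.mem_bot K).1 (hle y.2)]
  -- evaluation map `W → filtrateFam u`
  have hmemval : ∀ (u : P) (hu : u ∈ A) (w : ↥W),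
      w.1 ⟨u, hu⟩ ∈ filtrateFam K M A W u := by
    intro u hu w
    rw [hffmem u hu]
    exact ⟨w.1, w.2, rfl⟩
  set toFF : ∀ (u : P) (hu : u ∈ A), ↥W →ₗ[K] ↥(filtrateFam K M A W u) :=
    fun u hu => LinearMap.codRestrict (filtrateFam K M A W u)
      ((LinearMap.proj (⟨u, hu⟩ : ↥A)).comp W.subtype) (fun w => hmemval u hu w)
    with htoFF
  have htoFFapp : ∀ (u : P) (hu : u ∈ A) (w : ↥W), ((toFF u hu) w).1 = w.1 ⟨u, hu⟩ :=
    fun u hu w => rfl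
  have hbij : ∀ (u : P) (hu : u ∈ A), Function.Bijective (toFF u hu) := by
    intro u hu
    constructor
    · intro w1 w2 hww
      have h1 : w1.1 ⟨u, hu⟩ = w2.1 ⟨u, hu⟩ := by
        have := congrArg Subtype.val hww
        exact this
      apply Subtype.ext
      have hz : (w1.1 - w2.1) ⟨u, hu⟩ = 0 := by
        show w1.1 ⟨u, hu⟩ - w2.1 ⟨u, hu⟩ = 0
        rw [h1, sub_self]
      have := hinj ⟨u, hu⟩ (w1.1 - w2.1) (W.sub_mem w1.2 w2.2) hz
      have h2 : w1.1 - w2.1 = 0 := this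
      rw [← sub_eq_zero]
      exact h2
    · intro x
      have hle : filtrateFam K M A W u ≤ Submodule.map (projAt K M A u hu) W :=
        le_of_eq (hffmem u hu)
      obtain ⟨w, hwW, hwx⟩ := hle x.2
      exact ⟨⟨w, hwW⟩, Subtype.ext hwx⟩
  set e1 : ∀ (u : P) (hu : u ∈ A), ↥W ≃ₗ[K] ↥(filtrateFam K M A W u) :=
    fun u hu => LinearEquiv.ofBijective (toFF u hu) (hbij u hu) with he1
  set bigE : ∀ (u : P) (hu : u ∈ A),
      ↥(filtrateFam K M A W u) ≃ₗ[K] ({i : Fin n // u ∈ A} → K) :=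
    fun u hu => (e1 u hu).symm.trans (eW.trans
      (LinearEquiv.funCongrLeft K K (Equiv.subtypeUnivEquiv (fun _ => hu))))
    with hbigE
  refine ⟨NatIso.ofComponents (fun u =>
    if hu : u ∈ A then (bigE u hu).toModuleIso
    else
      { hom := 0
        inv := 0
        hom_inv_id := by
          haveI : Subsingleton ((subfunctor K M (filtrateFam K M A W) hfam).obj u) :=
            hsubs u hu
          refine ModuleCat.hom_ext (LinearMap.ext fun x => ?_)
          exact Subsingleton.elim _ _
        inv_hom_id := by
          haveI : IsEmpty {i : Fin n // u ∈ A} := ⟨fun i => hu i.2⟩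
          haveI : Subsingleton
              ((intervalDirectSum K (fun _ : Fin n => A) (fun _ => hA)).obj u) :=
            (inferInstance : Subsingleton ({i : Fin n // u ∈ A} → K))
          refine ModuleCat.hom_ext (LinearMap.ext fun x => ?_)
          exact Subsingleton.elim _ _ }) ?_⟩
  intro s u f
  have hsu : s ≤ u := leOfHom f
  by_cases hu : u ∈ A
  · by_cases hs : s ∈ A
    · -- main case
      erw [dif_pos hu, dif_pos hs]
      refine ModuleCat.hom_ext (LinearMap.ext fun x => ?_)
      obtain ⟨w, rfl⟩ := (e1 s hs).surjective x
      have hstep : ((subfunctor K M (filtrateFam K M A W) hfam).map f).hom ((e1 s hs) w) =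
          (e1 u hu) w := by
        apply Subtype.ext
        show rho K M (leOfHom f) (w.1 ⟨s, hs⟩) = w.1 ⟨u, hu⟩
        exact hcompat w.1 w.2 ⟨s, hs⟩ ⟨u, hu⟩ (leOfHom f)
      show (bigE u hu) (((subfunctor K M (filtrateFam K M A W) hfam).map f).hom ((e1 s hs) w)) =
        ((intervalDirectSum K (fun _ : Fin n => A) (fun _ => hA)).map f).hom ((bigE s hs) ((e1 s hs) w))
      rw [hstep]
      have hbigEapp : ∀ (u' : P) (hu' : u' ∈ A) (j : {i : Fin n // u' ∈ A}),
          (bigE u' hu') ((e1 u' hu') w) j = eW w j.1 := by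
        intro u' hu' j
        simp only [hbigE, LinearEquiv.trans_apply, LinearEquiv.symm_apply_apply]
        rfl
      funext j
      rw [hbigEapp u hu j]
      show eW w j.1 = ((if hs' : (s : P) ∈ A then
          LinearMap.proj (⟨j.1, hs'⟩ : {i : Fin n // s ∈ A}) else 0 :
            ({i : Fin n // s ∈ A} → K) →ₗ[K] K)) ((bigE s hs) ((e1 s hs) w))
      rw [dif_pos hs]
      exact (hbigEapp s hs ⟨j.1, hs⟩).symm
    · -- source is trivial
      haveI : Subsingleton ((subfunctor K M (filtrateFam K M A W) hfam).obj s) :=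
        hsubs s hs
      refine ModuleCat.hom_ext (LinearMap.ext fun x => ?_)
      have hx0 : x = 0 := Subsingleton.elim x 0
      rw [hx0, map_zero, map_zero]
  · -- target is trivial
    haveI : IsEmpty {i : Fin n // u ∈ A} := ⟨fun i => hu i.2⟩
    haveI : Subsingleton
        ((intervalDirectSum K (fun _ : Fin n => A) (fun _ => hA)).obj u) :=
      (inferInstance : Subsingleton ({i : Fin n // u ∈ A} → K))
    refine ModuleCat.hom_ext (LinearMap.ext fun x => ?_)
    exact Subsingleton.elim _ _

end BuildIso

/-- **Statement 12.** The submodule `M_R` obtained from a complement `W` of `L⁻` in `L⁺`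
chosen inside `lim (Ker⁺_r ∩ Ker⁺_t)` is isomorphic to a direct sum of `dim C_R(M)` copies of
the rectangle module `k_R`. -/
theorem filtrate_iso_power_of_rectangle_module
    (K : Type) [Field K] (X Y : Type) [LinearOrder X] [LinearOrder Y]
    (hX : ∃ C : Set X, C.Countable ∧ ∀ x : X, ∃ c ∈ C, c ≤ x)
    (hY : ∃ C : Set Y, C.Countable ∧ ∀ y : Y, ∃ c ∈ C, c ≤ y)
    (M : PersistenceModule K (X × Y)) (hM : Pfd K M) (hwe : WeaklyExact K M)
    (l r : Cut X) (b t : Cut Y)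
    (hcond : ∀ s ∈ rectOf l r b t,
      KerPlusH K M r s ⊓ KerPlusV K M t s ≤ ImPlusR K M l b s)
    (W : Submodule K (∀ v : ↥(rectOf l r b t), M.obj v.1))
    (hWle : W ≤ limVplus K M l r b t)
    (hWker : W ≤ Submodule.pi Set.univ (fun v : ↥(rectOf l r b t) =>
      KerPlusH K M r v.1 ⊓ KerPlusV K M t v.1))
    (hWinf : W ⊓ limVminus K M l r b t = ⊥)
    (hWsup : W ⊔ limVminus K M l r b t = limVplus K M l r b t)
    (hfam : ∀ (s u : X × Y) (h : s ≤ u),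
      Submodule.map (rho K M h) (filtrateFam K M (rectOf l r b t) W s) ≤
        filtrateFam K M (rectOf l r b t) W u) :
    Nonempty (subfunctor K M (filtrateFam K M (rectOf l r b t) W) hfam ≅
      intervalDirectSum K
        (fun _ : Fin (Module.finrank K ↥(countingSpace K M l r b t)) => rectOf l r b t)
        (fun _ => isConvex_rectOf l r b t)) := by
  classical
  obtain ⟨eq⟩ := W_equiv_counting K M l r b t hM W hWle hWinf hWsup
  have hcompat : ∀ w ∈ W, ∀ (s u : ↥(rectOf l r b t)) (h : s.1 ≤ u.1),
      rho K M h (w s) = w u := fun w hw s u h => (Submodule.mem_inf.1 (hWle hw)).1 s u h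
  have hinj : ∀ (u : ↥(rectOf l r b t)) (w : ∀ v : ↥(rectOf l r b t), M.obj v.1),
      w ∈ W → w u = 0 → w = 0 := fun u w hw h0 =>
    eval_injective_on_W K M l r b t hwe W hWle hWinf u w hw h0
  have hfd : FiniteDimensional K ↥W := by
    by_cases hne : Nonempty ↥(rectOf l r b t)
    · obtain ⟨u₀⟩ := hne
      haveI := hM u₀.1
      refine FiniteDimensional.of_injective
        ((LinearMap.proj u₀).comp W.subtype) ?_
      intro w1 w2 hw
      apply Subtype.ext
      have hz : (w1.1 - w2.1) u₀ = 0 := by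
        show w1.1 u₀ - w2.1 u₀ = 0
        rw [show w1.1 u₀ = w2.1 u₀ from hw, sub_self]
      have h2 := hinj u₀ _ (W.sub_mem w1.2 w2.2) hz
      rw [← sub_eq_zero]
      exact h2
    · haveI : IsEmpty ↥(rectOf l r b t) := not_nonempty_iff.1 hne
      haveI : Subsingleton (∀ v : ↥(rectOf l r b t), M.obj v.1) := inferInstance
      exact FiniteDimensional.of_injective (0 : ↥W →ₗ[K] K)
        (fun a bb _ => Subsingleton.elim a bb)
  have hn : Module.finrank K ↥(countingSpace K M l r b t) = Module.finrank K ↥W :=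
    (eq.finrank_eq).symm
  exact build_iso K M (rectOf l r b t) (isConvex_rectOf l r b t) W hfd hcompat hinj hfam
    (Module.finrank K ↥(countingSpace K M l r b t)) hn
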